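/- arXiv:1305.0355 — 5 statements merged into one kernel-verified Lean document; each statement's English description precedes it below -/
import Mathlib

section
/- Let X ∈ ℝ^{n×p} be a deterministic design matrix with empirical covariance Σ̂ = (XᵀX)/n, let θ0 ∈ ℝ^p have support S of size s0, and let ξ > 0. If κ̂(s0,1) > 0, then any minimizer θ̂ZN(ξ) of the zero-noise Lasso objective θ ↦ (1/2)⟨θ−θ0, Σ̂(θ−θ0)⟩ + ξ‖θ‖₁ satisfies ‖θ̂ZN(ξ)‖₀ ≤ (1 + 4‖Σ̂‖₂/κ̂(s0,1))·s0, where ‖·‖₀ counts nonzero entries and ‖Σ̂‖₂ is the operator norm. -/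
open Matrix Finset MeasureTheory ProbabilityTheory
noncomputable section

/-- The ℓ¹ norm of a vector. -/
def l1n {p : ℕ} (v : Fin p → ℝ) : ℝ := ∑ i, |v i|

/-- The number of nonzero entries of a vector (its "ℓ⁰ norm"). -/
def l0n {p : ℕ} (v : Fin p → ℝ) : ℕ := (Finset.univ.filter fun i => v i ≠ 0).card

/-- The support of a vector, as a `Finset`. -/
def suppv {p : ℕ} (v : Fin p → ℝ) : Finset (Fin p) := Finset.univ.filter fun i => v i ≠ 0

/-- The entrywise sign vector. -/
def sgnv {p : ℕ} (v : Fin p → ℝ) : Fin p → ℝ := fun i => Real.sign (v i)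

/-- The zero-noise Lasso objective
`θ ↦ (1/2)⟨θ−θ0, Σ(θ−θ0)⟩ + ξ‖θ‖₁`. -/
def znObj {p : ℕ} (S : Matrix (Fin p) (Fin p) ℝ) (th0 : Fin p → ℝ) (xi : ℝ)
    (th : Fin p → ℝ) : ℝ :=
  (1/2) * ((th - th0) ⬝ᵥ (S *ᵥ (th - th0))) + xi * l1n th

/-- The Lasso objective `θ ↦ (1/(2n))‖Y − Xθ‖₂² + λ‖θ‖₁`. -/
def lassoObj {n p : ℕ} (X : Matrix (Fin n) (Fin p) ℝ) (Y : Fin n → ℝ) (lam : ℝ)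
    (th : Fin p → ℝ) : ℝ :=
  (1/(2*(n:ℝ))) * (∑ i, (Y i - (X *ᵥ th) i)^2) + lam * l1n th

/-- The submatrix `A_{T,T'}` with rows in `T` and columns in `T'`. -/
def subM {p : ℕ} (A : Matrix (Fin p) (Fin p) ℝ) (T T' : Finset (Fin p)) : Matrix ↥T ↥T' ℝ :=
  A.submatrix Subtype.val Subtype.val

/-- The restriction `v_T` of a vector to coordinates in `T`. -/
def restrv {p : ℕ} (v : Fin p → ℝ) (T : Finset (Fin p)) : ↥T → ℝ := fun i => v i

/-- Extension of a vector indexed by `T` to a vector indexed by `Fin p`, by zero. -/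
def extendT {p : ℕ} (T : Finset (Fin p)) (g : ↥T → ℝ) : Fin p → ℝ :=
  fun i => if h : i ∈ T then g ⟨i, h⟩ else 0

/-- If `t ↦ t·L + t²·C` is nonnegative for all small `t` and `C ≥ 0`, then `L = 0`. -/
lemma deriv_zero_aux (L C δ : ℝ) (hδ : 0 < δ) (hC : 0 ≤ C)
    (h : ∀ t : ℝ, |t| < δ → 0 ≤ t * L + t^2 * C) : L = 0 := by
  by_contra hL
  have hL' : 0 < |L| := abs_pos.mpr hL
  set d := min (δ/2) (|L|/(2*C+2)) with hd
  have hd0 : 0 < d := lt_min (by linarith) (by positivity)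
  have hdδ : d < δ := lt_of_le_of_lt (min_le_left _ _) (by linarith)
  have hdL : d * C < |L| := by
    have h1 : d ≤ |L|/(2*C+2) := min_le_right _ _
    have h2 : d * C ≤ (|L|/(2*C+2)) * C := mul_le_mul_of_nonneg_right h1 hC
    have h3 : (|L|/(2*C+2)) * C < |L| := by
      rw [div_mul_eq_mul_div, div_lt_iff₀ (by linarith)]
      nlinarith
    linarith
  rcases lt_or_gt_of_ne hL with hneg | hpos
  · have h4 := h d (by rwa [abs_of_pos hd0])
    have h5 : |L| = -L := abs_of_neg hneg
    nlinarith [mul_lt_mul_of_pos_left hdL hd0]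
  · have h4 := h (-d) (by rwa [abs_neg, abs_of_pos hd0])
    have h5 : |L| = L := abs_of_pos hpos
    nlinarith [mul_lt_mul_of_pos_left hdL hd0]


set_option maxHeartbeats 1000000

/-- First-order optimality (KKT) for the zero-noise Lasso: at a nonzero coordinate of a
minimizer, the gradient coordinate of the quadratic part has absolute value `xi`. -/
lemma kkt_aux {p : ℕ} (Sig : Matrix (Fin p) (Fin p) ℝ) (th0 : Fin p → ℝ) (xi : ℝ)
    (hsym : ∀ v w : Fin p → ℝ, v ⬝ᵥ (Sig *ᵥ w) = w ⬝ᵥ (Sig *ᵥ v))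
    (hpsd : ∀ v : Fin p → ℝ, 0 ≤ v ⬝ᵥ (Sig *ᵥ v))
    (thZN : Fin p → ℝ)
    (hmin : ∀ th : Fin p → ℝ, znObj Sig th0 xi thZN ≤ znObj Sig th0 xi th)
    (i : Fin p) (hi : thZN i ≠ 0) :
    ((Sig *ᵥ (thZN - th0)) i)^2 = xi^2 := by
  set u : Fin p → ℝ := thZN - th0 with hu
  have hui : ∀ j, u j = thZN j - th0 j := fun j => rfl
  set s : ℝ := if 0 < thZN i then 1 else -1 with hsdef
  have hs2 : s^2 = 1 := by
    rcases le_or_gt (thZN i) 0 with h | h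
    · rw [hsdef, if_neg (not_lt.mpr h)]; norm_num
    · rw [hsdef, if_pos h]; norm_num
  have hδ : 0 < |thZN i| := abs_pos.mpr hi
  have he1 : (Pi.single i 1 : Fin p → ℝ) ⬝ᵥ (Sig *ᵥ u) = (Sig *ᵥ u) i := by
    rw [single_dotProduct, one_mul]
  have he2 : u ⬝ᵥ (Sig *ᵥ (Pi.single i 1 : Fin p → ℝ)) = (Sig *ᵥ u) i := by
    rw [hsym]; exact he1
  have he3 : (Pi.single i 1 : Fin p → ℝ) ⬝ᵥ (Sig *ᵥ (Pi.single i 1 : Fin p → ℝ)) = Sig i i := by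
    rw [Matrix.mulVec_single, single_dotProduct, one_mul]; simp
  have hC0 : 0 ≤ Sig i i := he3 ▸ hpsd _
  have habs : ∀ t : ℝ, |t| < |thZN i| → |thZN i + t| = |thZN i| + t * s := by
    intro t ht
    rcases hi.lt_or_gt with hneg | hpos
    · have h1 : thZN i + t < 0 := by
        have := abs_lt.mp ht
        rw [abs_of_neg hneg] at this
        linarith [this.2]
      rw [abs_of_neg h1, abs_of_neg hneg, hsdef, if_neg (not_lt.mpr hneg.le)]
      ring
    · have h1 : 0 < thZN i + t := by
        have := abs_lt.mp ht
        rw [abs_of_pos hpos] at this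
        linarith [this.1]
      rw [abs_of_pos h1, abs_of_pos hpos, hsdef, if_pos hpos]
      ring
  have hexp : ∀ t : ℝ, |t| < |thZN i| →
      0 ≤ t * ((Sig *ᵥ u) i + xi * s) + t^2 * ((1/2) * Sig i i) := by
    intro t ht
    have hmin' := hmin (thZN + t • (Pi.single i 1 : Fin p → ℝ))
    have hv : thZN + t • (Pi.single i 1 : Fin p → ℝ) - th0
        = u + t • (Pi.single i 1 : Fin p → ℝ) := by
      funext j
      simp only [Pi.add_apply, Pi.sub_apply, Pi.smul_apply, hui, smul_eq_mul]
      ring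
    have hquad : (thZN + t • (Pi.single i 1 : Fin p → ℝ) - th0) ⬝ᵥ
        (Sig *ᵥ (thZN + t • (Pi.single i 1 : Fin p → ℝ) - th0)) =
        u ⬝ᵥ (Sig *ᵥ u) + 2 * t * ((Sig *ᵥ u) i) + t^2 * Sig i i := by
      rw [hv, Matrix.mulVec_add, Matrix.mulVec_smul, add_dotProduct,
        dotProduct_add, dotProduct_add, dotProduct_smul,
        dotProduct_smul, smul_dotProduct, smul_dotProduct]
      simp only [smul_eq_mul]
      rw [he1, he2, he3]
      ring
    have hl1 : l1n (thZN + t • (Pi.single i 1 : Fin p → ℝ)) = l1n thZN + t * s := by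
      have hi' : i ∈ (Finset.univ : Finset (Fin p)) := Finset.mem_univ i
      rw [l1n, l1n, ← Finset.add_sum_erase _ _ hi', ← Finset.add_sum_erase _ _ hi']
      have hother : ∑ j ∈ Finset.univ.erase i,
          |(thZN + t • (Pi.single i 1 : Fin p → ℝ)) j| =
          ∑ j ∈ Finset.univ.erase i, |thZN j| := by
        refine Finset.sum_congr rfl fun j hj => ?_
        have hji : j ≠ i := Finset.ne_of_mem_erase hj
        rw [Pi.add_apply, Pi.smul_apply, Pi.single_eq_of_ne hji]
        simp
      rw [hother]
      have hati : (thZN + t • (Pi.single i 1 : Fin p → ℝ)) i = thZN i + t := by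
        rw [Pi.add_apply, Pi.smul_apply, Pi.single_eq_same]
        simp
      rw [hati, habs t ht]
      ring
    rw [znObj, znObj, hquad, hl1] at hmin'
    have hzZ : (thZN - th0) ⬝ᵥ (Sig *ᵥ (thZN - th0)) = u ⬝ᵥ (Sig *ᵥ u) := rfl
    rw [hzZ] at hmin'
    nlinarith [hmin']
  have hL := deriv_zero_aux ((Sig *ᵥ u) i + xi * s) ((1/2) * Sig i i) (|thZN i|) hδ
    (by linarith) hexp
  have : (Sig *ᵥ u) i = -(xi * s) := by linarith
  rw [hu] at this
  rw [this, neg_pow, mul_pow, hs2]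
  ring

/-- Lemma 1 of the paper, deterministic designs.
Let `X ∈ ℝ^{n×p}` be a deterministic design with empirical covariance `Σ̂ = XᵀX/n`, let
`θ0` have support `S` of size `s0`, and `ξ > 0`.  If the restricted eigenvalue constant
`κ̂(s0,1)` is positive (formalized: `kappa > 0` is any lower bound for the restricted
quadratic form) then any minimizer `θ̂ZN(ξ)` of the zero-noise Lasso objective satisfies
`‖θ̂ZN(ξ)‖₀ ≤ (1 + 4‖Σ̂‖₂/κ̂(s0,1))·s0`, where the operator norm `‖Σ̂‖₂` of the symmetric
positive semidefinite matrix `Σ̂` is formalized as any upper bound `B` for its quadratic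
form on unit vectors. -/
theorem stmt0
    (n p : ℕ) (hn : 0 < n)
    (X : Matrix (Fin n) (Fin p) ℝ)
    (Sig : Matrix (Fin p) (Fin p) ℝ)
    (hSigDef : Sig = (1 / (n : ℝ)) • (Xᵀ * X))
    (th0 : Fin p → ℝ) (s0 : ℕ) (hs0 : s0 = (suppv th0).card)
    (xi : ℝ) (hxi : 0 < xi)
    -- `kappa` is the restricted eigenvalue constant `κ̂(s0,1)` (any lower bound on the
    -- restricted quadratic form; applying with the exact minimum recovers the claim)
    (kappa : ℝ) (hkappa : 0 < kappa)
    (hRE : ∀ (J : Finset (Fin p)) (u : Fin p → ℝ), J.card ≤ s0 →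
      (∑ i ∈ Jᶜ, |u i|) ≤ (∑ i ∈ J, |u i|) →
      kappa * (∑ i, (u i)^2) ≤ u ⬝ᵥ (Sig *ᵥ u))
    -- `B` is the operator norm `‖Σ̂‖₂` (any upper bound on the quadratic form; for the
    -- symmetric PSD matrix `Σ̂` the least such `B` is exactly `‖Σ̂‖₂`)
    (B : ℝ)
    (hB : ∀ u : Fin p → ℝ, u ⬝ᵥ (Sig *ᵥ u) ≤ B * (∑ i, (u i)^2))
    (thZN : Fin p → ℝ)
    (hmin : ∀ th : Fin p → ℝ, znObj Sig th0 xi thZN ≤ znObj Sig th0 xi th) :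
    (l0n thZN : ℝ) ≤ (1 + 4 * B / kappa) * s0 := by
  -- the quadratic form in terms of X
  have hq : ∀ v w : Fin p → ℝ,
      v ⬝ᵥ (Sig *ᵥ w) = (1/(n:ℝ)) * ((X *ᵥ v) ⬝ᵥ (X *ᵥ w)) := by
    intro v w
    rw [hSigDef, Matrix.smul_mulVec, dotProduct_smul, smul_eq_mul,
      ← Matrix.mulVec_mulVec, Matrix.dotProduct_mulVec, Matrix.vecMul_transpose]
  have hsym : ∀ v w : Fin p → ℝ, v ⬝ᵥ (Sig *ᵥ w) = w ⬝ᵥ (Sig *ᵥ v) := by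
    intro v w; rw [hq, hq, dotProduct_comm]
  have hnn : (0:ℝ) ≤ 1/(n:ℝ) := by positivity
  have hpsd : ∀ v : Fin p → ℝ, 0 ≤ v ⬝ᵥ (Sig *ᵥ v) := by
    intro v
    rw [hq]
    exact mul_nonneg hnn (Finset.sum_nonneg fun i _ => mul_self_nonneg _)
  have hCS : ∀ v w : Fin p → ℝ,
      (v ⬝ᵥ (Sig *ᵥ w))^2 ≤ (v ⬝ᵥ (Sig *ᵥ v)) * (w ⬝ᵥ (Sig *ᵥ w)) := by
    intro v w
    rw [hq, hq, hq]
    have h1 := Finset.sum_mul_sq_le_sq_mul_sq Finset.univ (X *ᵥ v) (X *ᵥ w)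
    have e1 : (X *ᵥ v) ⬝ᵥ (X *ᵥ w) = ∑ j, (X *ᵥ v) j * (X *ᵥ w) j := rfl
    have e2 : (X *ᵥ v) ⬝ᵥ (X *ᵥ v) = ∑ j, (X *ᵥ v) j ^ 2 := by
      simp [dotProduct, sq]
    have e3 : (X *ᵥ w) ⬝ᵥ (X *ᵥ w) = ∑ j, (X *ᵥ w) j ^ 2 := by
      simp [dotProduct, sq]
    rw [e1, e2, e3]
    nlinarith [mul_le_mul_of_nonneg_left h1 (by positivity : (0:ℝ) ≤ (1/(n:ℝ))^2)]
  set u : Fin p → ℝ := thZN - th0 with hu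
  have hui : ∀ i, u i = thZN i - th0 i := fun i => rfl
  set S : Finset (Fin p) := suppv th0 with hS
  set K : Finset (Fin p) := suppv thZN with hK
  have hmemS : ∀ i, i ∈ S ↔ th0 i ≠ 0 := by intro i; simp [hS, suppv]
  have hmemK : ∀ i, i ∈ K ↔ thZN i ≠ 0 := by intro i; simp [hK, suppv]
  set Q : ℝ := u ⬝ᵥ (Sig *ᵥ u) with hQ
  have hQ0 : 0 ≤ Q := hpsd u
  -- basic inequality
  have hz0 : znObj Sig th0 xi th0 = xi * l1n th0 := by
    simp [znObj]
  have hbase : (1/2) * Q + xi * l1n thZN ≤ xi * l1n th0 := by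
    have := hmin th0
    rw [hz0] at this
    exact this
  -- sums
  have hsum1 : l1n thZN = (∑ i ∈ S, |thZN i|) + ∑ i ∈ Sᶜ, |thZN i| :=
    (Finset.sum_add_sum_compl S _).symm
  have hSne : ∀ i, i ∉ S → th0 i = 0 := by
    intro i hi
    by_contra hne
    exact hi ((hmemS i).mpr hne)
  have hsum0 : l1n th0 = ∑ i ∈ S, |th0 i| := by
    rw [l1n, ← Finset.sum_add_sum_compl S]
    have : ∑ i ∈ Sᶜ, |th0 i| = 0 :=
      Finset.sum_eq_zero fun i hi => by
        rw [hSne i (Finset.mem_compl.mp hi), abs_zero]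
    rw [this, add_zero]
  have hcompl_eq : ∑ i ∈ Sᶜ, |u i| = ∑ i ∈ Sᶜ, |thZN i| :=
    Finset.sum_congr rfl fun i hi => by
      rw [hui, hSne i (Finset.mem_compl.mp hi), sub_zero]
  have h5 : ∑ i ∈ S, (|th0 i| - |thZN i|) ≤ ∑ i ∈ S, |u i| := by
    refine Finset.sum_le_sum fun i _ => ?_
    have h := abs_sub_abs_le_abs_sub (th0 i) (thZN i)
    rw [hui, abs_sub_comm]
    exact h
  have h6 : ∑ i ∈ S, (|th0 i| - |thZN i|) =
      (∑ i ∈ S, |th0 i|) - ∑ i ∈ S, |thZN i| := Finset.sum_sub_distrib _ _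
  have hZc0 : 0 ≤ ∑ i ∈ Sᶜ, |thZN i| := Finset.sum_nonneg fun i _ => abs_nonneg _
  have hl1le : l1n thZN ≤ l1n th0 := by
    have h7 : xi * l1n thZN ≤ xi * l1n th0 := by linarith
    exact le_of_mul_le_mul_left h7 hxi
  -- cone condition
  have hcone : ∑ i ∈ Sᶜ, |u i| ≤ ∑ i ∈ S, |u i| := by
    rw [hcompl_eq]
    linarith
  -- restricted eigenvalue
  set N : ℝ := ∑ i, (u i)^2 with hN
  have hN0 : 0 ≤ N := Finset.sum_nonneg fun i _ => sq_nonneg _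
  have hre : kappa * N ≤ Q := hRE S u (le_of_eq hs0.symm) hcone
  -- bound on Q
  set A : ℝ := ∑ i ∈ S, |u i| with hA
  have hA0 : 0 ≤ A := Finset.sum_nonneg fun i _ => abs_nonneg _
  have h7 : l1n th0 - l1n thZN ≤ A := by
    rw [hsum1, hsum0]
    linarith
  have hQA : (1/2) * Q ≤ xi * A := by
    nlinarith [mul_le_mul_of_nonneg_left h7 hxi.le]
  have hA2 : A^2 ≤ (s0:ℝ) * N := by
    have h1 := Finset.sum_mul_sq_le_sq_mul_sq S (fun _ => (1:ℝ)) (fun i => |u i|)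
    simp only [one_mul, one_pow] at h1
    have h2 : ∑ i ∈ S, (1:ℝ) = (S.card : ℝ) := by simp
    have h3 : ∑ i ∈ S, |u i|^2 ≤ N := by
      have e : ∀ i ∈ S, |u i|^2 = (u i)^2 := fun i _ => sq_abs _
      rw [Finset.sum_congr rfl e]
      exact Finset.sum_le_sum_of_subset_of_nonneg (Finset.subset_univ S)
        fun i _ _ => sq_nonneg _
    have h4 : (S.card : ℝ) = (s0:ℝ) := by rw [hs0]
    rw [h2, h4] at h1
    nlinarith [Nat.cast_nonneg (α := ℝ) s0]
  have hQQ : kappa * Q * Q ≤ 4 * xi^2 * (s0:ℝ) * Q := by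
    have p1 : Q^2 ≤ 4 * xi^2 * A^2 := by nlinarith
    have c1 : kappa * Q^2 ≤ kappa * (4 * xi^2 * A^2) :=
      mul_le_mul_of_nonneg_left p1 hkappa.le
    have c2 : (4 * xi^2) * (kappa * A^2) ≤ (4 * xi^2) * (kappa * ((s0:ℝ) * N)) := by
      apply mul_le_mul_of_nonneg_left _ (by positivity)
      exact mul_le_mul_of_nonneg_left hA2 hkappa.le
    have c3 : (4 * xi^2 * (s0:ℝ)) * (kappa * N) ≤ (4 * xi^2 * (s0:ℝ)) * Q := by
      apply mul_le_mul_of_nonneg_left hre (by positivity)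
    linarith [c1, c2, c3]
  -- KKT conditions
  have hkkt : ∀ i, thZN i ≠ 0 → ((Sig *ᵥ u) i)^2 = xi^2 := by
    intro i hi
    exact kkt_aux Sig th0 xi hsym hpsd thZN hmin i hi
  -- B is nonnegative (using p > 0), handled via case split
  rcases Nat.eq_zero_or_pos p with hp | hp
  · -- p = 0 : everything is zero
    have hl0 : l0n thZN = 0 := by
      rw [l0n]
      have : (Finset.univ : Finset (Fin p)) = ∅ := by
        subst hp
        rfl
      rw [Finset.card_eq_zero]
      rw [Finset.filter_eq_empty_iff]
      intro x _
      exact absurd (Fin.pos x) (by omega)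
    have hs00 : s0 = 0 := by
      rw [hs0]
      have h2 : S.card ≤ p := by simpa using Finset.card_le_univ S
      omega
    rw [hl0, hs00]
    simp
  have hBnn : 0 ≤ B := by
    set e0 : Fin p → ℝ := Pi.single ⟨0, hp⟩ 1 with he0
    have h1 : 0 ≤ e0 ⬝ᵥ (Sig *ᵥ e0) := hpsd e0
    have h2 := hB e0
    have h3 : ∑ j, (e0 j)^2 = 1 := by
      rw [he0]
      simp [Pi.single_apply, sq]
    rw [h3, mul_one] at h2
    linarith
  -- the sparsity count
  set m : ℕ := (K \ S).card with hm
  have hcount : (m:ℝ) * xi^2 ≤ B * Q := by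
    have h1 : ∑ i ∈ K \ S, ((Sig *ᵥ u) i)^2 = (m:ℝ) * xi^2 := by
      rw [Finset.sum_congr rfl (fun i hi => hkkt i ((hmemK i).mp (Finset.mem_sdiff.mp hi).1))]
      rw [Finset.sum_const, nsmul_eq_mul]
    have h2 : ∑ i ∈ K \ S, ((Sig *ᵥ u) i)^2 ≤ ∑ i, ((Sig *ᵥ u) i)^2 :=
      Finset.sum_le_sum_of_subset_of_nonneg (Finset.subset_univ _)
        fun i _ _ => sq_nonneg _
    set v : Fin p → ℝ := Sig *ᵥ u with hv
    set W : ℝ := ∑ i, (v i)^2 with hW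
    have hW0 : 0 ≤ W := Finset.sum_nonneg fun i _ => sq_nonneg _
    have hWB : W ≤ B * Q := by
      have hvv : v ⬝ᵥ (Sig *ᵥ u) = W := by
        rw [hW, ← hv]
        simp [dotProduct, sq]
      have hcs := hCS v u
      rw [hvv] at hcs
      have hBv := hB v
      rw [← hW] at hBv
      rcases eq_or_lt_of_le hW0 with hWz | hWpos
      · rw [← hWz]
        exact mul_nonneg hBnn hQ0
      · nlinarith [hcs, hBv, hQ0]
    calc (m:ℝ) * xi^2 = ∑ i ∈ K \ S, ((Sig *ᵥ u) i)^2 := h1.symm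
      _ ≤ ∑ i, ((Sig *ᵥ u) i)^2 := h2
      _ = W := rfl
      _ ≤ B * Q := hWB
  -- m ≤ 4 B s0 / kappa
  have hmbound : (m:ℝ) ≤ 4 * B * (s0:ℝ) / kappa := by
    rcases eq_or_lt_of_le hQ0 with hQz | hQpos
    · have : (m:ℝ) * xi^2 ≤ 0 := by rw [← hQz] at hcount; linarith [hcount]
      have hm0 : (m:ℝ) ≤ 0 := by nlinarith [sq_nonneg xi, pow_pos hxi 2]
      have : (0:ℝ) ≤ 4 * B * (s0:ℝ) / kappa := by positivity
      linarith [Nat.cast_nonneg (α := ℝ) m]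
    · rw [le_div_iff₀ hkappa]
      have hkQ : kappa * Q ≤ 4 * xi^2 * (s0:ℝ) := by
        nlinarith [hQQ, hQpos]
      nlinarith [mul_le_mul_of_nonneg_right hcount hkappa.le,
        mul_le_mul_of_nonneg_left hkQ hBnn, pow_pos hxi 2]
  -- finish
  have hKeq : l0n thZN = K.card := rfl
  have hsplit : (K.card : ℝ) ≤ (m:ℝ) + (s0:ℝ) := by
    have h1 : (K \ S).card + (K ∩ S).card = K.card := Finset.card_sdiff_add_card_inter K S
    have h2 : (K ∩ S).card ≤ S.card := Finset.card_le_card (Finset.inter_subset_right)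
    have h3 : S.card = s0 := hs0.symm
    have : K.card ≤ m + s0 := by omega
    exact_mod_cast this
  have hfin : (1 + 4 * B / kappa) * (s0:ℝ) = (s0:ℝ) + 4 * B * (s0:ℝ) / kappa := by
    field_simp
  rw [hKeq, hfin]
  linarith
end
end

section
/- Let Σ̂ ∈ ℝ^{p×p} be positive semidefinite, θ0 ∈ ℝ^p with support S of size s0, ξ > 0, and suppose κ̂(s0,1) > 0. Then any minimizer θ̂ZN(ξ) of the zero-noise Lasso objective satisfies the following bounds for û = (θ̂ZN(ξ) − θ0)/ξ: (i) ‖û_{S^c}‖₁ ≤ ‖û_S‖₁; (ii) ‖û_S‖₁ ≤ 2s0/κ̂(s0,1); (iii) ⟨û, Σ̂û⟩ ≤ 4s0/κ̂(s0,1). -/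
open Matrix Finset MeasureTheory ProbabilityTheory
noncomputable section

/-- For `Σ̂` positive semidefinite, `θ0` with support `S` of size `s0`,
`ξ > 0` and `κ̂(s0,1) > 0` (formalized: `kappa > 0` any lower bound on the restricted
quadratic form), any minimizer `θ̂ZN(ξ)` of the zero-noise Lasso objective satisfies,
with `û = (θ̂ZN(ξ) − θ0)/ξ`:
(i) `‖û_{Sᶜ}‖₁ ≤ ‖û_S‖₁`; (ii) `‖û_S‖₁ ≤ 2s0/κ̂(s0,1)`; (iii) `⟨û, Σ̂û⟩ ≤ 4s0/κ̂(s0,1)`. -/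
theorem stmt1
    (p : ℕ)
    (Sig : Matrix (Fin p) (Fin p) ℝ) (hSig : Sig.PosSemidef)
    (th0 : Fin p → ℝ) (s0 : ℕ) (hs0 : s0 = (suppv th0).card)
    (xi : ℝ) (hxi : 0 < xi)
    (kappa : ℝ) (hkappa : 0 < kappa)
    (hRE : ∀ (J : Finset (Fin p)) (u : Fin p → ℝ), J.card ≤ s0 →
      (∑ i ∈ Jᶜ, |u i|) ≤ (∑ i ∈ J, |u i|) →
      kappa * (∑ i, (u i)^2) ≤ u ⬝ᵥ (Sig *ᵥ u))
    (thZN : Fin p → ℝ)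
    (hmin : ∀ th : Fin p → ℝ, znObj Sig th0 xi thZN ≤ znObj Sig th0 xi th)
    (u : Fin p → ℝ) (hu : u = (1/xi) • (thZN - th0)) :
    (∑ i ∈ (suppv th0)ᶜ, |u i|) ≤ (∑ i ∈ suppv th0, |u i|) ∧
    (∑ i ∈ suppv th0, |u i|) ≤ 2 * s0 / kappa ∧
    u ⬝ᵥ (Sig *ᵥ u) ≤ 4 * s0 / kappa := by
  set S := suppv th0 with hS
  set Q := u ⬝ᵥ (Sig *ᵥ u) with hQdef
  set a := ∑ i ∈ S, |u i| with ha
  set b := ∑ i ∈ Sᶜ, |u i| with hb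
  have hzero : ∀ i ∈ Sᶜ, th0 i = 0 := by
    intro i hi
    simp only [hS, suppv, Finset.mem_compl, Finset.mem_filter, Finset.mem_univ, true_and,
      not_not] at hi
    exact hi
  have hv : thZN - th0 = xi • u := by
    rw [hu]; ext i; simp; field_simp
  have hQnn : 0 ≤ Q := by
    have := hSig.dotProduct_mulVec_nonneg u
    simpa using this
  -- main inequality from minimality at th0
  have hmain : (1/2) * Q + b ≤ a := by
    have h0 := hmin th0
    simp only [znObj] at h0
    rw [hv] at h0
    have hqs : (xi • u) ⬝ᵥ (Sig *ᵥ (xi • u)) = xi^2 * Q := by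
      rw [smul_dotProduct, mulVec_smul, dotProduct_smul]
      ring_nf
      simp [hQdef, smul_eq_mul]
      ring
    rw [hqs] at h0
    have hsub : th0 - th0 = 0 := by simp
    rw [hsub] at h0
    simp only [Matrix.mulVec_zero, dotProduct_zero, mul_zero, zero_add] at h0
    -- l1n thZN ≥ ∑_S |th0| - xi*a + xi*b ; l1n th0 = ∑_S |th0|
    have hl0 : l1n th0 = ∑ i ∈ S, |th0 i| := by
      rw [l1n, ← Finset.sum_add_sum_compl S]
      have : ∑ i ∈ Sᶜ, |th0 i| = 0 := by
        apply Finset.sum_eq_zero; intro i hi; rw [hzero i hi]; simp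
      rw [this, add_zero]
    have hlz : (∑ i ∈ S, |th0 i|) - xi * a + xi * b ≤ l1n thZN := by
      have hZ : ∀ i, thZN i = th0 i + xi * u i := by
        intro i
        have := congrFun hv i
        simp at this
        linarith
      rw [l1n, ← Finset.sum_add_sum_compl S]
      have h1 : (∑ i ∈ S, |th0 i|) - xi * a ≤ ∑ i ∈ S, |thZN i| := by
        rw [ha, Finset.mul_sum, ← Finset.sum_sub_distrib]
        apply Finset.sum_le_sum
        intro i _
        rw [hZ i]
        have h2 : |xi * u i| = xi * |u i| := by
          rw [abs_mul, abs_of_pos hxi]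
        calc |th0 i| - xi * |u i| = |th0 i| - |xi * u i| := by rw [h2]
          _ ≤ |th0 i + xi * u i| := by
              have := abs_sub_abs_le_abs_sub (th0 i) (-(xi * u i))
              simp at this ⊢
              linarith [abs_sub_abs_le_abs_sub (th0 i + xi * u i) (xi * u i),
                abs_add_le (th0 i + xi * u i) (-(xi*u i))]
      have h2 : xi * b = ∑ i ∈ Sᶜ, |thZN i| := by
        rw [hb, Finset.mul_sum]
        apply Finset.sum_congr rfl
        intro i hi
        rw [hZ i, hzero i hi, zero_add, abs_mul, abs_of_pos hxi]
      linarith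
    have hx2 : 0 < xi^2 := by positivity
    nlinarith [h0, hl0, hlz]
  have h1 : b ≤ a := by linarith
  have hRE' := hRE S u (le_of_eq hs0.symm) h1
  have hCS : a^2 ≤ (s0 : ℝ) * ∑ i, (u i)^2 := by
    have hcs := sq_sum_le_card_mul_sum_sq (s := S) (f := fun i => |u i|)
    have h3 : ∑ i ∈ S, |u i|^2 ≤ ∑ i, (u i)^2 := by
      rw [← Finset.sum_add_sum_compl S (fun i => (u i)^2)]
      have : ∀ i ∈ S, |u i|^2 = (u i)^2 := fun i _ => sq_abs _
      rw [Finset.sum_congr rfl this]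
      have : 0 ≤ ∑ i ∈ Sᶜ, (u i)^2 := Finset.sum_nonneg fun i _ => sq_nonneg _
      linarith
    have hcard : (S.card : ℝ) = (s0 : ℝ) := by rw [hs0]
    calc a^2 ≤ (S.card : ℝ) * ∑ i ∈ S, |u i|^2 := by exact_mod_cast hcs
      _ = (s0:ℝ) * ∑ i ∈ S, |u i|^2 := by rw [hcard]
      _ ≤ (s0:ℝ) * ∑ i, (u i)^2 := by
          apply mul_le_mul_of_nonneg_left h3 (by positivity)
  have hbnn : 0 ≤ b := Finset.sum_nonneg fun i _ => abs_nonneg _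
  have hQle : Q ≤ 2 * a := by linarith
  have h2 : a ≤ 2 * s0 / kappa := by
    have hka : kappa * a^2 ≤ 2 * s0 * a := by
      calc kappa * a^2 ≤ kappa * ((s0:ℝ) * ∑ i, (u i)^2) :=
            mul_le_mul_of_nonneg_left hCS (le_of_lt hkappa)
        _ = (s0:ℝ) * (kappa * ∑ i, (u i)^2) := by ring
        _ ≤ (s0:ℝ) * Q := mul_le_mul_of_nonneg_left hRE' (by positivity)
        _ ≤ (s0:ℝ) * (2*a) := mul_le_mul_of_nonneg_left hQle (by positivity)
        _ = 2 * s0 * a := by ring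
    have hann : 0 ≤ a := Finset.sum_nonneg fun i _ => abs_nonneg _
    rcases eq_or_lt_of_le hann with h | h
    · rw [← h]; positivity
    · rw [le_div_iff₀ hkappa]
      have : kappa * a ≤ 2 * s0 := by nlinarith
      linarith
  refine ⟨h1, h2, ?_⟩
  calc Q ≤ 2 * a := hQle
    _ ≤ 2 * (2 * s0 / kappa) := by linarith
    _ = 4 * s0 / kappa := by ring
end
end

section
/- Let X ∈ ℝ^{n×p} be deterministic with Σ̂ = (XᵀX)/n, let T0 ⊆ [p] be such that Σ̂_{T0,T0} is invertible, let W be a centered Gaussian vector in ℝ^n with covariance σ²I_n, and set r̂ = (XᵀW)/n. Then for any c1 > 1, P(‖Σ̂_{T0,T0}^{-1} r̂_{T0}‖_∞ ≥ σ √(2c1 log p / n) · ‖Σ̂_{T0,T0}^{-1}‖₂^{1/2}) ≤ 2p^{1−c1}. -/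
open scoped NNReal ENNReal
open Real


open Matrix Finset MeasureTheory ProbabilityTheory
noncomputable section

private lemma gauss_shift' (v : ℝ≥0) (hv : v ≠ 0) (s x : ℝ) :
    rexp (s * x) * gaussianPDFReal 0 v x
      = rexp (v * s^2 / 2) * gaussianPDFReal (v*s) v x := by
  have hv' : (v:ℝ) ≠ 0 := by exact_mod_cast hv
  simp only [gaussianPDFReal]
  rw [mul_left_comm, mul_left_comm (rexp (v*s^2/2)), ← Real.exp_add, ← Real.exp_add]
  congr 2
  field_simp
  ring

private lemma integrable_exp_gaussian' (v : ℝ≥0) (hv : v ≠ 0) (s : ℝ) :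
    Integrable (fun x => rexp (s * x)) (gaussianReal 0 v) := by
  rw [gaussianReal_of_var_ne_zero 0 hv]
  have hd : gaussianPDF 0 v = fun x => ((gaussianPDFReal 0 v x).toNNReal : ℝ≥0∞) := by
    funext x; simp [gaussianPDF, ENNReal.ofReal]
  rw [hd, integrable_withDensity_iff_integrable_smul
    ((measurable_gaussianPDFReal 0 v).real_toNNReal)]
  have : (fun x => ((gaussianPDFReal 0 v x).toNNReal : ℝ≥0) • rexp (s * x))
      = fun x => rexp (v * s^2 / 2) * gaussianPDFReal (v*s) v x := by
    funext x
    rw [NNReal.smul_def, Real.coe_toNNReal _ (gaussianPDFReal_nonneg 0 v x), smul_eq_mul,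
      mul_comm (gaussianPDFReal 0 v x), gauss_shift' v hv s x]
  rw [this]
  exact (integrable_gaussianPDFReal (v*s) v).const_mul _

private lemma integral_exp_gaussian' (v : ℝ≥0) (hv : v ≠ 0) (s : ℝ) :
    ∫ x, rexp (s * x) ∂(gaussianReal 0 v) = rexp (v * s^2 / 2) := by
  rw [gaussianReal_of_var_ne_zero 0 hv]
  have hd : gaussianPDF 0 v = fun x => ((gaussianPDFReal 0 v x).toNNReal : ℝ≥0∞) := by
    funext x; simp [gaussianPDF, ENNReal.ofReal]
  rw [hd, integral_withDensity_eq_integral_smul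
    ((measurable_gaussianPDFReal 0 v).real_toNNReal)]
  have : (fun x => ((gaussianPDFReal 0 v x).toNNReal : ℝ≥0) • rexp (s * x))
      = fun x => rexp (v * s^2 / 2) * gaussianPDFReal (v*s) v x := by
    funext x
    rw [NNReal.smul_def, Real.coe_toNNReal _ (gaussianPDFReal_nonneg 0 v x), smul_eq_mul,
      mul_comm (gaussianPDFReal 0 v x), gauss_shift' v hv s x]
  rw [this, integral_const_mul, integral_gaussianPDFReal_eq_one (v*s) hv, mul_one]

private lemma pi_integrable_prod' {n : ℕ} (μ : Measure ℝ) [IsProbabilityMeasure μ]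
    (f : Fin n → ℝ → ℝ) (hf : ∀ i, Integrable (f i) μ) :
    Integrable (fun x : Fin n → ℝ => ∏ i, f i (x i)) (Measure.pi fun _ => μ) := by
  induction n with
  | zero => simp [integrable_const_iff]
  | succ m ih =>
      have hmp := ((measurePreserving_piFinSuccAbove (fun _ : Fin (m+1) => μ) 0).symm)
      rw [← hmp.integrable_comp_emb (MeasurableEquiv.measurableEmbedding _)]
      simp_rw [MeasurableEquiv.piFinSuccAbove_symm_apply, Fin.insertNthEquiv,
        Fin.prod_univ_succ, Fin.insertNth_zero]
      simp only [Fin.zero_succAbove, cast_eq, Function.comp_def, Fin.cons_zero, Fin.cons_succ,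
        Equiv.coe_fn_mk]
      exact Integrable.mul_prod (hf 0) (ih (fun i => f i.succ) (fun i => hf _))

private lemma pi_integral_prod' {n : ℕ} (μ : Measure ℝ) [IsProbabilityMeasure μ]
    (f : Fin n → ℝ → ℝ) (hf : ∀ i, Integrable (f i) μ) :
    ∫ x : Fin n → ℝ, ∏ i, f i (x i) ∂(Measure.pi fun _ => μ) = ∏ i, ∫ x, f i x ∂μ := by
  induction n with
  | zero => simp
  | succ m ih =>
      calc
        _ = ∫ x : ℝ × (Fin m → ℝ),
            f 0 x.1 * ∏ i : Fin m, f i.succ (x.2 i) ∂(μ.prod (Measure.pi fun _ => μ)) := by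
          rw [← ((measurePreserving_piFinSuccAbove
            (fun _ : Fin (m+1) => μ) 0).symm).integral_comp']
          congr 1
          funext x
          simp [MeasurableEquiv.piFinSuccAbove_symm_apply, Fin.insertNthEquiv,
            Fin.prod_univ_succ, Fin.insertNth_zero, Fin.zero_succAbove]
        _ = (∫ x, f 0 x ∂μ) * ∏ i : Fin m, ∫ x, f i.succ x ∂μ := by
          rw [← ih (fun i => f i.succ) (fun i => hf _), ← integral_prod_mul]
        _ = ∏ i, ∫ x, f i x ∂μ := by rw [Fin.prod_univ_succ]

private lemma gauss_lin_tail_one' {n : ℕ} (v : ℝ≥0) (hv : v ≠ 0) (b : Fin n → ℝ) (ε t : ℝ)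
    (ht : 0 ≤ t) :
    (Measure.pi fun _ : Fin n => gaussianReal 0 v) {w | ε ≤ ∑ j, b j * w j}
      ≤ ENNReal.ofReal (rexp (-(t*ε) + v * t^2 * (∑ j, (b j)^2)/2)) := by
  set P := Measure.pi fun _ : Fin n => gaussianReal 0 v with hP
  have hexp : (fun w : Fin n → ℝ => rexp (t * ∑ j, b j * w j))
      = fun w => ∏ j, rexp ((t * b j) * w j) := by
    funext w
    rw [Finset.mul_sum, Real.exp_sum]
    congr 1; funext j; ring_nf
  have h_int : Integrable (fun w : Fin n → ℝ => rexp (t * ∑ j, b j * w j)) P := by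
    rw [hexp]
    exact pi_integrable_prod' _ _ (fun j => integrable_exp_gaussian' v hv (t * b j))
  have hmgf : mgf (fun w : Fin n → ℝ => ∑ j, b j * w j) P t
      = rexp (v * t^2 * (∑ j, (b j)^2)/2) := by
    have h0 : mgf (fun w : Fin n → ℝ => ∑ j, b j * w j) P t
        = ∫ w, rexp (t * ∑ j, b j * w j) ∂P := rfl
    rw [h0, hexp, hP, pi_integral_prod' _ _
      (fun j => integrable_exp_gaussian' v hv (t * b j))]
    have h1 : ∀ j : Fin n, ∫ x, rexp ((t * b j) * x) ∂(gaussianReal 0 v)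
        = rexp ((v * t^2/2) * (b j)^2) := by
      intro j
      rw [integral_exp_gaussian' v hv (t * b j)]
      congr 1; ring
    simp_rw [h1]
    rw [← Real.exp_sum, ← Finset.mul_sum]
    congr 1; ring
  have hch := measure_ge_le_exp_mul_mgf (X := fun w : Fin n → ℝ => ∑ j, b j * w j)
    (μ := P) ε ht h_int
  rw [hmgf, ← Real.exp_add] at hch
  have hne : P {w | ε ≤ ∑ j, b j * w j} ≠ ⊤ := measure_ne_top _ _
  rw [← ENNReal.ofReal_toReal hne]
  exact ENNReal.ofReal_le_ofReal (by rw [neg_mul] at hch; exact hch)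

private lemma gauss_lin_tail' {n : ℕ} (v : ℝ≥0) (hv : v ≠ 0) (a : Fin n → ℝ) (ε t : ℝ)
    (ht : 0 ≤ t) :
    (Measure.pi fun _ : Fin n => gaussianReal 0 v) {w | ε ≤ |∑ j, a j * w j|}
      ≤ ENNReal.ofReal (2 * rexp (-(t*ε) + v * t^2 * (∑ j, (a j)^2)/2)) := by
  set P := Measure.pi fun _ : Fin n => gaussianReal 0 v
  have hsub : {w : Fin n → ℝ | ε ≤ |∑ j, a j * w j|}
      ⊆ {w | ε ≤ ∑ j, a j * w j} ∪ {w | ε ≤ ∑ j, (-a) j * w j} := by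
    intro w hw
    rcases le_abs.mp (Set.mem_setOf_eq ▸ hw) with h | h
    · exact Or.inl h
    · refine Or.inr ?_
      simpa [← Finset.sum_neg_distrib, neg_mul] using h
  have h1 := gauss_lin_tail_one' v hv a ε t ht
  have h2 := gauss_lin_tail_one' v hv (-a) ε t ht
  have hsq : (∑ j, ((-a) j)^2) = ∑ j, (a j)^2 := by simp
  rw [hsq] at h2
  calc P {w | ε ≤ |∑ j, a j * w j|}
      ≤ P ({w | ε ≤ ∑ j, a j * w j} ∪ {w | ε ≤ ∑ j, (-a) j * w j}) := measure_mono hsub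
    _ ≤ P {w | ε ≤ ∑ j, a j * w j} + P {w | ε ≤ ∑ j, (-a) j * w j} := measure_union_le _ _
    _ ≤ ENNReal.ofReal (rexp (-(t*ε) + v * t^2 * (∑ j, (a j)^2)/2))
        + ENNReal.ofReal (rexp (-(t*ε) + v * t^2 * (∑ j, (a j)^2)/2)) := add_le_add h1 h2
    _ = ENNReal.ofReal (2 * rexp (-(t*ε) + v * t^2 * (∑ j, (a j)^2)/2)) := by
        rw [← ENNReal.ofReal_add (Real.exp_nonneg _) (Real.exp_nonneg _)]
        congr 1; ring

/-- Lemma 5 of the paper.  For a deterministic design with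
`Σ̂ = XᵀX/n`, `T0` with `Σ̂_{T0,T0}` invertible, and `W ∼ N(0,σ²Iₙ)`, `r̂ = XᵀW/n`:
`P(‖Σ̂_{T0,T0}^{-1} r̂_{T0}‖_∞ ≥ σ√(2c1 log p/n)·‖Σ̂_{T0,T0}^{-1}‖₂^{1/2}) ≤ 2p^{1−c1}`.
The operator norm of the symmetric matrix `Σ̂_{T0,T0}^{-1}` is formalized by the
quadratic-form upper bound `B` (the least such `B` is exactly the operator norm). -/
theorem stmt7
    (n p : ℕ) (hn : 0 < n)
    (sigma : ℝ) (hsigma : 0 < sigma)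
    (X : Matrix (Fin n) (Fin p) ℝ)
    (Sig : Matrix (Fin p) (Fin p) ℝ) (hSigDef : Sig = (1 / (n : ℝ)) • (Xᵀ * X))
    (T0 : Finset (Fin p))
    (hinv : IsUnit (subM Sig T0 T0).det)
    -- `B` is the operator norm `‖Σ̂_{T0,T0}^{-1}‖₂`
    (B : ℝ)
    (hB : ∀ u : ↥T0 → ℝ, u ⬝ᵥ ((subM Sig T0 T0)⁻¹ *ᵥ u) ≤ B * (∑ i, (u i)^2))
    (c1 : ℝ) (hc1 : 1 < c1) :
    (Measure.pi fun _ : Fin n => gaussianReal 0 (Real.toNNReal (sigma ^ 2)))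
      {w | ∃ i ∈ T0,
        sigma * Real.sqrt (2 * c1 * Real.log p / n) * Real.sqrt B ≤
          |extendT T0 ((subM Sig T0 T0)⁻¹ *ᵥ
            restrv ((1 / (n : ℝ)) • (Xᵀ *ᵥ w)) T0) i|}
      ≤ ENNReal.ofReal (2 * (p : ℝ) ^ (1 - c1)) := by
  classical
  set v : ℝ≥0 := Real.toNNReal (sigma ^ 2) with hvdef
  have hσ2 : (0:ℝ) < sigma^2 := by positivity
  have hv : v ≠ 0 := by
    simp only [hvdef, ne_eq, Real.toNNReal_eq_zero, not_le]
    exact hσ2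
  have hvc : (v : ℝ) = sigma^2 := Real.coe_toNNReal _ hσ2.le
  set P := Measure.pi fun _ : Fin n => gaussianReal 0 v with hP
  set ε := sigma * Real.sqrt (2 * c1 * Real.log p / n) * Real.sqrt B with hεdef
  rcases T0.eq_empty_or_nonempty with hT | hT
  · subst hT
    have hempty : {w : Fin n → ℝ | ∃ i ∈ (∅ : Finset (Fin p)), ε ≤
        |extendT ∅ ((subM Sig ∅ ∅)⁻¹ *ᵥ restrv ((1 / (n : ℝ)) • (Xᵀ *ᵥ w)) ∅) i|} = ∅ := by
      ext w; simp
    rw [hempty, measure_empty]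
    exact zero_le
  obtain ⟨i0, hi0⟩ := hT
  have hp : 0 < p := i0.pos
  have hp0 : (0:ℝ) < p := by exact_mod_cast hp
  have hnR : ((n:ℝ)) ≠ 0 := Nat.cast_ne_zero.mpr hn.ne'
  have hnpos : (0:ℝ) < n := by exact_mod_cast hn
  have hlogp : 0 ≤ Real.log p := Real.log_nonneg (by exact_mod_cast hp)
  have hεnn : 0 ≤ ε := by
    rw [hεdef]; positivity
  set S := subM Sig T0 T0 with hS
  set M := S⁻¹ with hM
  set Xs : Matrix (Fin n) ↥T0 ℝ := X.submatrix id Subtype.val with hXs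
  have hSX : S = (1/(n:ℝ)) • (Xsᵀ * Xs) := by
    rw [hS, hSigDef]
    ext k l
    simp [subM, Matrix.mul_apply, Matrix.transpose_apply, hXs]
  have hSsym : Sᵀ = S := by
    rw [hSX, Matrix.transpose_smul, Matrix.transpose_mul, Matrix.transpose_transpose]
  have hMsym : Mᵀ = M := by
    rw [hM, Matrix.transpose_nonsing_inv, hSsym]
  -- main per-coordinate bound
  have key : ∀ i ∈ T0, P {w | ε ≤
      |extendT T0 (M *ᵥ restrv ((1 / (n : ℝ)) • (Xᵀ *ᵥ w)) T0) i|}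
      ≤ ENNReal.ofReal (2 * (p:ℝ) ^ (-c1)) := by
    intro i hi
    set j0 : ↥T0 := ⟨i, hi⟩ with hj0
    set u : ↥T0 → ℝ := M j0 with hu
    set c : Fin n → ℝ := Xs *ᵥ u with hc
    set a : Fin n → ℝ := fun j => (1/(n:ℝ)) * c j with ha
    have hMe : M *ᵥ Pi.single j0 1 = u := by
      funext k
      rw [Matrix.mulVec_single]
      show M k j0 * 1 = u k
      rw [mul_one]
      exact congrFun (congrFun hMsym j0) k
    have hSu : S *ᵥ u = Pi.single j0 1 := by
      rw [← hMe, Matrix.mulVec_mulVec, Matrix.mul_nonsing_inv _ hinv, Matrix.one_mulVec]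
    have hQ : u ⬝ᵥ (S *ᵥ u) = u j0 := by
      rw [hSu, dotProduct_single, mul_one]
    have hBu : u j0 ≤ B := by
      have h := hB (Pi.single j0 1)
      rw [hMe, single_dotProduct, one_mul] at h
      have hsum1 : (∑ k : ↥T0, ((Pi.single j0 1 : ↥T0 → ℝ) k)^2) = 1 := by
        simp [Pi.single_apply, sq, Finset.sum_ite_eq']
      rw [hsum1, mul_one] at h
      exact h
    have hQc : u ⬝ᵥ (S *ᵥ u) = (1/(n:ℝ)) * ∑ j, (c j)^2 := by
      rw [hSX, Matrix.smul_mulVec, dotProduct_smul, smul_eq_mul]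
      congr 1
      have h2 : (Xsᵀ * Xs) *ᵥ u = Xsᵀ *ᵥ c := by rw [hc, Matrix.mulVec_mulVec]
      rw [h2, Matrix.dotProduct_mulVec, Matrix.vecMul_transpose, ← hc]
      simp [dotProduct, sq]
    have hA : (∑ j, (a j)^2) = (1/(n:ℝ)) * (u ⬝ᵥ (S *ᵥ u)) := by
      rw [hQc, ha]
      simp only [mul_pow]
      rw [← Finset.mul_sum]
      ring
    have hSuF : ∀ l : ↥T0, (S *ᵥ u) l = ∑ j, a j * X j (l:Fin p) := by
      intro l
      rw [hSX, Matrix.smul_mulVec]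
      have h2 : (Xsᵀ * Xs) *ᵥ u = Xsᵀ *ᵥ c := by rw [hc, Matrix.mulVec_mulVec]
      rw [h2]
      simp only [Pi.smul_apply, smul_eq_mul, Matrix.mulVec, dotProduct,
        Matrix.transpose_apply]
      rw [Finset.mul_sum]
      congr 1; funext j
      simp only [ha, hXs, Matrix.submatrix_apply, id]
      ring
    have hZ : ∀ w : Fin n → ℝ,
        extendT T0 (M *ᵥ restrv ((1 / (n : ℝ)) • (Xᵀ *ᵥ w)) T0) i = ∑ j, a j * w j := by
      intro w
      have hrestr : restrv ((1 / (n : ℝ)) • (Xᵀ *ᵥ w)) T0 = (1/(n:ℝ)) • (Xsᵀ *ᵥ w) := by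
        funext k
        simp [restrv, Matrix.mulVec, dotProduct, hXs, Matrix.transpose_apply, Finset.mul_sum]
      have hext : extendT T0 (M *ᵥ restrv ((1 / (n : ℝ)) • (Xᵀ *ᵥ w)) T0) i
          = (M *ᵥ restrv ((1 / (n : ℝ)) • (Xᵀ *ᵥ w)) T0) j0 := by
        simp [extendT, dif_pos hi, hj0]
      rw [hext, hrestr, Matrix.mulVec_smul, Pi.smul_apply, smul_eq_mul]
      have hrow : (M *ᵥ (Xsᵀ *ᵥ w)) j0 = u ⬝ᵥ (Xsᵀ *ᵥ w) := by
        simp [Matrix.mulVec, dotProduct, hu]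
      rw [hrow, Matrix.dotProduct_mulVec, Matrix.vecMul_transpose, ← hc]
      simp only [dotProduct, ha, Finset.mul_sum]
      congr 1; funext j; ring
    -- positivity of u j0 and B
    have hub0 : 0 ≤ u j0 := by
      rw [← hQ, hQc]
      positivity
    have hupos : 0 < u j0 := by
      rcases hub0.lt_or_eq with h | h
      · exact h
      · exfalso
        have hsum0 : (∑ j, (c j)^2) = 0 := by
          have h3 : u j0 = (1/(n:ℝ)) * ∑ j, (c j)^2 := hQ.symm.trans hQc
          rw [← h] at h3
          field_simp at h3
          linarith [h3]
        have hc0 : ∀ j, c j = 0 := by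
          intro j
          have h4 := (Finset.sum_eq_zero_iff_of_nonneg
            (fun j _ => sq_nonneg (c j))).mp hsum0 j (Finset.mem_univ j)
          exact pow_eq_zero_iff (two_ne_zero) |>.mp h4
        have h1 : (1:ℝ) = ∑ j, a j * X j i := by
          have h2 := hSuF j0
          rw [hSu] at h2
          simpa using h2
        rw [Finset.sum_eq_zero (fun j _ => by simp [ha, hc0 j])] at h1
        exact one_ne_zero h1
    have hBpos : 0 < B := hupos.trans_le hBu
    have harg : 0 ≤ 2 * c1 * Real.log p / n := by positivity
    have hε2 : ε^2 = sigma^2 * (2*c1*Real.log p/(n:ℝ)) * B := by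
      rw [hεdef, mul_pow, mul_pow, Real.sq_sqrt harg, Real.sq_sqrt hBpos.le]
    set t := ε * (n:ℝ) / (sigma^2 * B) with htdef
    have ht : 0 ≤ t := by rw [htdef]; positivity
    have hAle : (∑ j, (a j)^2) ≤ B/(n:ℝ) := by
      rw [hA, hQ]
      calc (1/(n:ℝ)) * u j0
          ≤ (1/(n:ℝ)) * B := mul_le_mul_of_nonneg_left hBu (by positivity)
        _ = B / (n:ℝ) := by ring
    have hexpb : -(t*ε) + (v:ℝ) * t^2 * (∑ j, (a j)^2)/2 ≤ -(c1 * Real.log p) := by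
      rw [hvc]
      have step1 : sigma^2 * t^2 * (∑ j, (a j)^2)/2 ≤ sigma^2 * t^2 * (B/(n:ℝ))/2 := by
        gcongr
      have step2 : -(t*ε) + sigma^2*t^2*(B/(n:ℝ))/2 = -(c1 * Real.log p) := by
        have hBne : B ≠ 0 := hBpos.ne'
        have hsne : sigma ≠ 0 := hsigma.ne'
        have g1 : -(t*ε) + sigma^2*t^2*(B/(n:ℝ))/2
            = -(ε^2*(n:ℝ)/(2*sigma^2*B)) := by
          rw [htdef]
          field_simp
          ring
        rw [g1, hε2]
        field_simp
      linarith
    have htail := gauss_lin_tail' v hv a ε t ht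
    have hppow : rexp (-(c1 * Real.log p)) = (p:ℝ) ^ (-c1) := by
      rw [Real.rpow_def_of_pos hp0]
      congr 1; ring
    have hfin : ENNReal.ofReal (2 * rexp (-(t*ε) + (v:ℝ) * t^2 * (∑ j, (a j)^2)/2))
        ≤ ENNReal.ofReal (2 * (p:ℝ) ^ (-c1)) := by
      apply ENNReal.ofReal_le_ofReal
      rw [← hppow]
      have := Real.exp_le_exp.mpr hexpb
      linarith
    have hset : {w : Fin n → ℝ | ε ≤
        |extendT T0 (M *ᵥ restrv ((1 / (n : ℝ)) • (Xᵀ *ᵥ w)) T0) i|}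
        = {w : Fin n → ℝ | ε ≤ |∑ j, a j * w j|} := by
      ext w
      simp only [Set.mem_setOf_eq, hZ w]
    rw [hset]
    exact htail.trans hfin
  -- union bound
  have hunion : {w : Fin n → ℝ | ∃ i ∈ T0, ε ≤
      |extendT T0 (M *ᵥ restrv ((1 / (n : ℝ)) • (Xᵀ *ᵥ w)) T0) i|}
      = ⋃ i ∈ T0, {w : Fin n → ℝ | ε ≤
        |extendT T0 (M *ᵥ restrv ((1 / (n : ℝ)) • (Xᵀ *ᵥ w)) T0) i|} := by
    ext w
    simp
  have hcard : T0.card ≤ p := by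
    simpa using Finset.card_le_univ T0
  calc P {w | ∃ i ∈ T0, ε ≤
        |extendT T0 (M *ᵥ restrv ((1 / (n : ℝ)) • (Xᵀ *ᵥ w)) T0) i|}
      = P (⋃ i ∈ T0, {w : Fin n → ℝ | ε ≤
        |extendT T0 (M *ᵥ restrv ((1 / (n : ℝ)) • (Xᵀ *ᵥ w)) T0) i|}) := by rw [hunion]
    _ ≤ ∑ i ∈ T0, P {w : Fin n → ℝ | ε ≤
        |extendT T0 (M *ᵥ restrv ((1 / (n : ℝ)) • (Xᵀ *ᵥ w)) T0) i|} :=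
          measure_biUnion_finset_le _ _
    _ ≤ ∑ _i ∈ T0, ENNReal.ofReal (2 * (p:ℝ) ^ (-c1)) :=
          Finset.sum_le_sum (fun i hi => key i hi)
    _ = T0.card • ENNReal.ofReal (2 * (p:ℝ) ^ (-c1)) := Finset.sum_const _
    _ ≤ (p : ℝ≥0∞) * ENNReal.ofReal (2 * (p:ℝ) ^ (-c1)) := by
          rw [nsmul_eq_mul]
          exact mul_le_mul_left (by exact_mod_cast hcard) _
    _ = ENNReal.ofReal (2 * (p : ℝ) ^ (1 - c1)) := by
          rw [← ENNReal.ofReal_natCast p, ← ENNReal.ofReal_mul (by positivity)]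
          congr 1
          rw [Real.rpow_sub hp0, Real.rpow_one, Real.rpow_neg hp0.le]
          ring
end
end

section
/- Let Σ ∈ ℝ^{p×p} be positive definite, θ0 ∈ ℝ^p with support S of size s0, and ξ > 0. Then the (unique) population-level Lasso estimator θ̂∞(ξ) = argmin_θ {(1/2)⟨θ−θ0, Σ(θ−θ0)⟩ + ξ‖θ‖₁} satisfies ‖θ̂∞(ξ)‖₀ ≤ (1 + 4‖Σ‖₂/κ(s0,1))·s0, where κ(s,c0) is the restricted eigenvalue constant of Σ. -/
open Matrix Finset MeasureTheory ProbabilityTheory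
noncomputable section

lemma dot_sym' {p : ℕ} (Sig : Matrix (Fin p) (Fin p) ℝ) (hsym : ∀ i j, Sig i j = Sig j i)
    (u v : Fin p → ℝ) : u ⬝ᵥ (Sig *ᵥ v) = v ⬝ᵥ (Sig *ᵥ u) := by
  simp only [dotProduct, Matrix.mulVec, Finset.mul_sum]
  rw [Finset.sum_comm]
  refine Finset.sum_congr rfl fun i _ => Finset.sum_congr rfl fun j _ => ?_
  rw [hsym j i]; ring

lemma l1n_update {p : ℕ} (thinf : Fin p → ℝ) (i : Fin p) (t : ℝ) :
    l1n (thinf + Pi.single i t) = l1n thinf + (|thinf i + t| - |thinf i|) := by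
  unfold l1n
  have h : ∀ j : Fin p, |thinf j + (Pi.single i t : Fin p → ℝ) j|
      = |thinf j| + (if j = i then |thinf i + t| - |thinf i| else 0) := by
    intro j
    by_cases h : j = i
    · subst h; simp
    · simp [Pi.single_eq_of_ne h, h]
  have h2 : ∀ j : Fin p, |(thinf + Pi.single i t : Fin p → ℝ) j| = |thinf j + (Pi.single i t : Fin p → ℝ) j| := fun j => rfl
  rw [Finset.sum_congr rfl fun j _ => h2 j, Finset.sum_congr rfl fun j _ => h j,
    Finset.sum_add_distrib]
  simp

lemma kkt_sq {p : ℕ} (Sig : Matrix (Fin p) (Fin p) ℝ) (hsym : ∀ i j, Sig i j = Sig j i)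
    (hdiag : ∀ i, 0 ≤ Sig i i)
    (th0 : Fin p → ℝ) (xi : ℝ) (hxi : 0 < xi) (thinf : Fin p → ℝ)
    (hmin : ∀ th, znObj Sig th0 xi thinf ≤ znObj Sig th0 xi th)
    (i : Fin p) (hi : thinf i ≠ 0) :
    ((Sig *ᵥ (thinf - th0)) i)^2 = xi^2 := by
  set u : Fin p → ℝ := thinf - th0 with hu
  set a : ℝ := (Sig *ᵥ u) i + xi * Real.sign (thinf i) with ha
  -- expansion of the objective
  have hexp : ∀ t : ℝ, znObj Sig th0 xi (thinf + Pi.single i t)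
      = znObj Sig th0 xi thinf + t * (Sig *ᵥ u) i + t^2/2 * Sig i i
        + xi * (|thinf i + t| - |thinf i|) := by
    intro t
    have hv : thinf + Pi.single i t - th0 = u + Pi.single i t := by
      funext j; simp [hu]; ring
    unfold znObj
    rw [hv, l1n_update]
    have h1 : (u + Pi.single i t) ⬝ᵥ (Sig *ᵥ (u + Pi.single i t))
        = u ⬝ᵥ (Sig *ᵥ u) + 2 * (t * (Sig *ᵥ u) i) + t^2 * Sig i i := by
      rw [Matrix.mulVec_add, dotProduct_add, add_dotProduct, add_dotProduct]
      rw [dot_sym' Sig hsym u (Pi.single i t)]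
      rw [Matrix.mulVec_single]
      have h2 : (Pi.single i t : Fin p → ℝ) ⬝ᵥ (Sig *ᵥ u) = t * (Sig *ᵥ u) i := by
        simp [dotProduct, Pi.single_apply, Finset.sum_ite_eq']
      have h3 : (Pi.single i t : Fin p → ℝ) ⬝ᵥ (MulOpposite.op t • Sig.col i) = t^2 * Sig i i := by
        simp [dotProduct, Pi.single_apply, Finset.sum_ite_eq', Matrix.col, op_smul_eq_mul]; ring
      rw [h2, h3]; ring
    rw [h1]; ring
  -- key inequality for small t
  have key : ∀ t : ℝ, |t| ≤ |thinf i| → 0 ≤ t * a + t^2/2 * Sig i i := by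
    intro t ht
    have hdiff : |thinf i + t| - |thinf i| = t * Real.sign (thinf i) := by
      rcases hi.lt_or_gt with h | h
      · rw [Real.sign_of_neg h]
        rw [abs_of_neg h] at ht
        rw [abs_of_nonpos (by cases abs_le.1 ht with | intro h1 h2 => linarith),
            abs_of_neg h]
        ring
      · rw [Real.sign_of_pos h]
        rw [abs_of_pos h] at ht
        rw [abs_of_nonneg (by cases abs_le.1 ht with | intro h1 h2 => linarith),
            abs_of_pos h]
        ring
    have := hmin (thinf + Pi.single i t)
    rw [hexp t, hdiff] at this
    simp only [ha]; nlinarith [this]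
  -- conclude a = 0
  have ha0 : a = 0 := by
    by_contra hne
    set c : ℝ := Sig i i with hc
    have hc0 : 0 ≤ c := hdiag i
    have hti : 0 < |thinf i| := abs_pos.2 hi
    set m : ℝ := min (1/(c+1)) (|thinf i| / (|a|+1)) with hm
    have hm0 : 0 < m := lt_min (by positivity) (by positivity)
    have hm1 : m ≤ 1/(c+1) := min_le_left _ _
    have hm2 : m ≤ |thinf i| / (|a|+1) := min_le_right _ _
    have habs : |(-a) * m| ≤ |thinf i| := by
      rw [abs_mul, abs_neg, abs_of_pos hm0]
      have h1 : |a| * m ≤ |a| * (|thinf i| / (|a|+1)) :=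
        mul_le_mul_of_nonneg_left hm2 (abs_nonneg a)
      have h2 : |a| * (|thinf i| / (|a|+1)) ≤ |thinf i| := by
        rw [mul_div_assoc', div_le_iff₀ (by positivity : (0:ℝ) < |a|+1)]
        nlinarith [abs_nonneg a, hti]
      linarith
    have hkey := key ((-a) * m) habs
    have hmc : m * c < 2 := by
      have h4 : m * (c+1) ≤ 1 := (le_div_iff₀ (by positivity : (0:ℝ) < c+1)).mp hm1
      nlinarith
    have hApos : 0 < a^2 := by positivity
    have heq : -a * m * a + (-a * m) ^ 2 / 2 * c = a^2 * m * (m*c/2 - 1) := by ring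
    rw [heq] at hkey
    have h6 : 0 < a^2 * m * (2 - m*c) :=
      mul_pos (mul_pos hApos hm0) (by linarith)
    have h7 : a^2*m*(m*c/2-1) + a^2*m*(2-m*c)/2 = 0 := by ring
    clear_value a c m
    linarith
  -- finish: (Sig *ᵥ u) i = - xi * sign
  have hsq : Real.sign (thinf i) ^ 2 = 1 := by
    rcases hi.lt_or_gt with h | h
    · rw [Real.sign_of_neg h]; norm_num
    · rw [Real.sign_of_pos h]; norm_num
  have : (Sig *ᵥ u) i = - (xi * Real.sign (thinf i)) := by linarith [ha0, ha ▸ ha0]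
  rw [hu] at this
  rw [this]
  rw [neg_pow, mul_pow, hsq]
  ring

set_option maxHeartbeats 1600000 in
/-- Lemma 6 of the paper.  Let `Σ` be positive definite, `θ0` have
support of size `s0`, `ξ > 0`.  Then the unique population-level estimator `θ̂∞(ξ)`
satisfies `‖θ̂∞(ξ)‖₀ ≤ (1 + 4‖Σ‖₂/κ(s0,1))·s0`.  The restricted eigenvalue constant
`κ(s0,1)` is formalized as any positive lower bound `kappa` on the restricted quadratic
form, and the operator norm `‖Σ‖₂` of the symmetric matrix `Σ` as any upper bound `B` on
the quadratic form on unit vectors. -/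
theorem stmt9
    (p : ℕ)
    (Sig : Matrix (Fin p) (Fin p) ℝ) (hSig : Sig.PosDef)
    (th0 : Fin p → ℝ) (s0 : ℕ) (hs0 : s0 = (suppv th0).card)
    (xi : ℝ) (hxi : 0 < xi)
    (kappa : ℝ) (hkappa : 0 < kappa)
    (hRE : ∀ (J : Finset (Fin p)) (u : Fin p → ℝ), J.card ≤ s0 →
      (∑ i ∈ Jᶜ, |u i|) ≤ (∑ i ∈ J, |u i|) →
      kappa * (∑ i, (u i)^2) ≤ u ⬝ᵥ (Sig *ᵥ u))
    (B : ℝ)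
    (hB : ∀ u : Fin p → ℝ, u ⬝ᵥ (Sig *ᵥ u) ≤ B * (∑ i, (u i)^2))
    (thinf : Fin p → ℝ)
    (hmin : ∀ th : Fin p → ℝ, znObj Sig th0 xi thinf ≤ znObj Sig th0 xi th) :
    (l0n thinf : ℝ) ≤ (1 + 4 * B / kappa) * s0 := by
  classical
  have hsym : ∀ i j, Sig i j = Sig j i := by
    intro i j
    have := congrFun (congrFun hSig.1 j) i
    simpa [Matrix.conjTranspose_apply] using this
  have hPSD : ∀ v : Fin p → ℝ, 0 ≤ v ⬝ᵥ (Sig *ᵥ v) := by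
    intro v
    have := hSig.posSemidef.dotProduct_mulVec_nonneg v
    simpa using this
  rcases Nat.eq_zero_or_pos p with hp | hp
  · subst hp
    have h0 : l0n thinf = 0 := by simp [l0n]
    have hs : s0 = 0 := by simp [hs0, suppv]
    simp [h0, hs]
  -- B is positive
  have hBpos : 0 < B := by
    set e : Fin p → ℝ := Pi.single ⟨0, hp⟩ 1 with he
    have hen : e ≠ 0 := by
      intro h
      have := congrFun h ⟨0, hp⟩
      simp [he] at this
    have h1 : 0 < e ⬝ᵥ (Sig *ᵥ e) := by
      have := hSig.dotProduct_mulVec_pos hen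
      simpa using this
    have h2 : (∑ i, (e i)^2) = 1 := by
      simp [he, Pi.single_apply]
    have := hB e
    rw [h2] at this
    linarith
  set u : Fin p → ℝ := thinf - th0 with hu
  set Q : ℝ := u ⬝ᵥ (Sig *ᵥ u) with hQdef
  have hQ0 : 0 ≤ Q := hPSD u
  set S : Finset (Fin p) := suppv th0 with hS
  set A : ℝ := ∑ i ∈ S, |u i| with hA
  set C : ℝ := ∑ i ∈ Sᶜ, |u i| with hC
  -- basic inequality
  have hbasic : Q / 2 + xi * l1n thinf ≤ xi * l1n th0 := by
    have := hmin th0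
    unfold znObj at this
    simp only [sub_self] at this
    rw [show ((0 : Fin p → ℝ) ⬝ᵥ (Sig *ᵥ 0)) = 0 by simp] at this
    linarith
  have hl1 : l1n th0 - l1n thinf ≤ A - C := by
    have e1 : l1n th0 = ∑ i ∈ S, |th0 i| := by
      rw [l1n, ← Finset.sum_add_sum_compl S]
      have : ∑ i ∈ Sᶜ, |th0 i| = 0 := by
        apply Finset.sum_eq_zero
        intro i hi
        simp [hS, suppv] at hi
        simp [hi]
      linarith
    have e2 : l1n thinf = (∑ i ∈ S, |thinf i|) + C := by
      rw [l1n, ← Finset.sum_add_sum_compl S]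
      have : ∑ i ∈ Sᶜ, |thinf i| = C := by
        apply Finset.sum_congr rfl
        intro i hi
        simp [hS, suppv] at hi
        simp [hu, hi]
      linarith
    have e3 : ∑ i ∈ S, (|th0 i| - |thinf i|) ≤ A := by
      apply Finset.sum_le_sum
      intro i _
      calc |th0 i| - |thinf i| ≤ |th0 i - thinf i| := abs_sub_abs_le_abs_sub _ _
      _ = |u i| := by rw [hu]; simp [abs_sub_comm]
    rw [e1, e2]
    rw [Finset.sum_sub_distrib] at e3
    linarith
  have hQA : Q ≤ 2 * xi * (A - C) := by nlinarith [mul_le_mul_of_nonneg_left hl1 hxi.le]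
  have hA0 : 0 ≤ A := Finset.sum_nonneg fun i _ => abs_nonneg _
  have hC0 : 0 ≤ C := Finset.sum_nonneg fun i _ => abs_nonneg _
  have hcone : C ≤ A := by nlinarith
  set N : ℝ := ∑ i, (u i)^2 with hN
  have hre : kappa * N ≤ Q := hRE S u (le_of_eq hs0.symm) hcone
  have hN0 : 0 ≤ N := Finset.sum_nonneg fun i _ => sq_nonneg _
  -- Cauchy-Schwarz: A^2 ≤ s0 * N
  have hcs : A^2 ≤ (s0 : ℝ) * N := by
    have h1 := Finset.sum_mul_sq_le_sq_mul_sq S (fun i => |u i|) (fun _ => 1)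
    simp only [mul_one, one_pow, sq_abs] at h1
    have h2 : ∑ i ∈ S, (u i)^2 ≤ N := by
      apply Finset.sum_le_sum_of_subset_of_nonneg (Finset.subset_univ S)
      intro i _ _; exact sq_nonneg _
    have h3 : (∑ _i ∈ S, (1:ℝ)) = (s0:ℝ) := by
      rw [Finset.sum_const, hs0]; simp
    rw [h3] at h1
    calc A^2 ≤ (∑ i ∈ S, (u i)^2) * (s0:ℝ) := h1
    _ ≤ N * s0 := mul_le_mul_of_nonneg_right h2 (by positivity)
    _ = (s0:ℝ) * N := by ring
  -- ‖Σu‖² ≤ B Q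
  set w : Fin p → ℝ := Sig *ᵥ u with hw
  set X : ℝ := ∑ i, (w i)^2 with hX
  have hX0 : 0 ≤ X := Finset.sum_nonneg fun i _ => sq_nonneg _
  have hXw : X = w ⬝ᵥ w := by
    rw [hX, dotProduct]
    exact Finset.sum_congr rfl fun i _ => by rw [sq]
  set D : ℝ := w ⬝ᵥ (Sig *ᵥ w) with hD
  have hCS2 : X^2 ≤ Q * D := by
    have hquad : ∀ x : ℝ, 0 ≤ D * (x*x) + (2*X) * x + Q := by
      intro x
      have h1 := hPSD (u + x • w)
      have h2 : (u + x • w) ⬝ᵥ (Sig *ᵥ (u + x • w))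
          = Q + x * (u ⬝ᵥ (Sig *ᵥ w)) + x * (w ⬝ᵥ (Sig *ᵥ u)) + x^2 * D := by
        rw [Matrix.mulVec_add, Matrix.mulVec_smul, dotProduct_add, add_dotProduct,
          add_dotProduct]
        simp only [smul_dotProduct, dotProduct_smul, smul_eq_mul, hD, hQdef]
        ring
      have h3 : u ⬝ᵥ (Sig *ᵥ w) = X := by
        rw [dot_sym' Sig hsym, ← hw, ← hXw]
      have h4 : w ⬝ᵥ (Sig *ᵥ u) = X := by rw [← hw, ← hXw]
      rw [h2, h3, h4] at h1
      nlinarith [h1]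
    have := discrim_le_zero hquad
    rw [discrim] at this
    nlinarith [this]
  have hDB : D ≤ B * X := hB w
  -- counting
  set T : Finset (Fin p) := Finset.univ.filter (fun i => thinf i ≠ 0) with hT
  have hdiag : ∀ i, 0 ≤ Sig i i := by
    intro i
    have h := hPSD (Pi.single i 1)
    have h2 : (Pi.single i 1 : Fin p → ℝ) ⬝ᵥ (Sig *ᵥ Pi.single i 1) = Sig i i := by
      rw [Matrix.mulVec_single]
      simp [dotProduct, Pi.single_apply, Finset.sum_ite_eq']
    rwa [h2] at h
  have hcount : (T.card : ℝ) * xi^2 ≤ X := by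
    have h1 : ∀ i ∈ T, (w i)^2 = xi^2 := by
      intro i hi
      simp only [hT, Finset.mem_filter] at hi
      exact kkt_sq Sig hsym hdiag th0 xi hxi thinf hmin i hi.2
    have h2 : ∑ i ∈ T, (w i)^2 = (T.card : ℝ) * xi^2 := by
      rw [Finset.sum_congr rfl h1, Finset.sum_const, nsmul_eq_mul]
    rw [← h2, hX]
    apply Finset.sum_le_sum_of_subset_of_nonneg (Finset.subset_univ T)
    intro i _ _; exact sq_nonneg _
  have hl0 : (l0n thinf : ℝ) = (T.card : ℝ) := by rw [l0n, hT]
  rw [hl0]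
  -- now pure arithmetic
  set t : ℝ := (T.card : ℝ) with ht
  have ht0 : 0 ≤ t := Nat.cast_nonneg _
  set s : ℝ := (s0 : ℝ) with hs
  have hsnn : 0 ≤ s := Nat.cast_nonneg _
  clear_value u Q A C N w X D T t s
  clear hQdef hA hC hN hw hX hD hXw hT hl0 hu hS
  -- kappa * Q ≤ 4 xi^2 s
  have hQA2 : Q ≤ 2 * xi * A := by linarith [hQA, mul_nonneg hxi.le hC0]
  have hQbound : kappa * Q ≤ 4 * xi^2 * s := by
    rcases eq_or_lt_of_le hQ0 with h | h
    · rw [← h, mul_zero]; positivity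
    · have hQ2 : Q^2 ≤ 4 * xi^2 * A^2 := by
        have h' := mul_self_le_mul_self hQ0 hQA2
        nlinarith [h']
      have hAQ : kappa * A^2 ≤ s * Q := by
        calc kappa * A^2 ≤ kappa * (s*N) := mul_le_mul_of_nonneg_left hcs hkappa.le
        _ = s * (kappa * N) := by ring
        _ ≤ s * Q := mul_le_mul_of_nonneg_left hre hsnn
      have h4 : (kappa * Q) * Q ≤ (4 * xi^2 * s) * Q := by
        calc (kappa*Q)*Q = kappa * Q^2 := by ring
        _ ≤ kappa * (4*xi^2*A^2) := mul_le_mul_of_nonneg_left hQ2 hkappa.le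
        _ = 4*xi^2*(kappa*A^2) := by ring
        _ ≤ 4*xi^2*(s*Q) := mul_le_mul_of_nonneg_left hAQ (by positivity)
        _ = (4*xi^2*s)*Q := by ring
      exact le_of_mul_le_mul_right h4 h
  have hXB : X ≤ B * Q := by
    rcases eq_or_lt_of_le hX0 with h | h
    · rw [← h]; positivity
    · have h6 : X * X ≤ (B * Q) * X := by
        calc X*X = X^2 := by ring
        _ ≤ Q*D := hCS2
        _ ≤ Q*(B*X) := mul_le_mul_of_nonneg_left hDB hQ0
        _ = (B*Q)*X := by ring
      exact le_of_mul_le_mul_right h6 h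
  have hxis : 0 < xi^2 := by positivity
  have h8 : (1 + 4 * B / kappa) * s = (kappa * s + 4 * B * s) / kappa := by
    field_simp
  rw [h8, le_div_iff₀ hkappa]
  have hfin : (t * kappa) * xi^2 ≤ (4 * B * s) * xi^2 := by
    calc (t * kappa) * xi^2 = (t * xi^2) * kappa := by ring
    _ ≤ X * kappa := mul_le_mul_of_nonneg_right hcount hkappa.le
    _ ≤ (B * Q) * kappa := mul_le_mul_of_nonneg_right hXB hkappa.le
    _ = B * (kappa * Q) := by ring
    _ ≤ B * (4 * xi^2 * s) := mul_le_mul_of_nonneg_left hQbound hBpos.le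
    _ = (4 * B * s) * xi^2 := by ring
  have h9 : t * kappa ≤ 4 * B * s := le_of_mul_le_mul_right hfin hxis
  linarith [mul_nonneg hkappa.le hsnn]
end
end

section
/- (Confounding-variable example.) Fix s0 ≥ 1, p > s0, and a ∈ [1/s0, 1/√s0). Let S = {1,…,s0}, let u_S ∈ ℝ^p be the indicator vector of S, let e_p be the p-th standard basis vector, and let Σ = I_{p×p} + a(e_p u_Sᵀ + u_S e_pᵀ); Σ is positive definite with minimum eigenvalue 1 − a√s0. Let θ0 ∈ ℝ^p be supported on S with θ0_i > 0 for all i ∈ S and θ_min = min_{i∈S} θ0_i. Then: (1) the standard irrepresentability quantity satisfies ‖Σ_{S^c,S} Σ_{S,S}^{-1} sign(θ0_S)‖_∞ = a·s0 ≥ 1, so irrepresentability fails in the strict sense; (2) for every ξ ∈ (0, ξ*) with ξ* = min(1, (1−a²s0)/(1−a))·θ_min, the unique population-level estimator θ̂∞(ξ) satisfies θ̂∞_p(ξ) = ((a·s0 − 1)/(1 − a²s0))·ξ, θ̂∞_S(ξ) = θ0_S − (a·θ̂∞_p(ξ) + ξ)·u_S restricted to S, and θ̂∞_i(ξ) = 0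 for i ∉ S ∪ {p}; in particular T0 = S ∪ {p} when a > 1/s0, and the generalized irrepresentability quantity satisfies ‖Σ_{T0^c,T0} Σ_{T0,T0}^{-1} v0_{T0}‖_∞ = 0, where v0_{T0} is the all-ones vector on T0. -/
open Matrix Finset MeasureTheory ProbabilityTheory
noncomputable section

set_option maxHeartbeats 1000000

lemma dot_symm {p : ℕ} (A : Matrix (Fin p) (Fin p) ℝ)
    (hSym : ∀ i j, A i j = A j i) (u v : Fin p → ℝ) : u ⬝ᵥ A *ᵥ v = v ⬝ᵥ A *ᵥ u := by
  simp only [dotProduct, Matrix.mulVec, dotProduct, Finset.mul_sum]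
  rw [Finset.sum_comm]
  exact Finset.sum_congr rfl fun i _ => Finset.sum_congr rfl fun j _ => by rw [hSym j i]; ring

lemma znObj_expand {p : ℕ} (A : Matrix (Fin p) (Fin p) ℝ)
    (hSym : ∀ i j, A i j = A j i) (th0 : Fin p → ℝ) (xi : ℝ) (ths th : Fin p → ℝ) :
    znObj A th0 xi th = znObj A th0 xi ths
      + (1/2) * ((th - ths) ⬝ᵥ A *ᵥ (th - ths))
      + ((A *ᵥ (ths - th0)) ⬝ᵥ (th - ths))
      + xi * (l1n th - l1n ths) := by
  have hth : th - th0 = (ths - th0) + (th - ths) := by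
    funext i; simp only [Pi.sub_apply, Pi.add_apply]; ring
  have h1 : (ths - th0) ⬝ᵥ A *ᵥ (th - ths) = (th - ths) ⬝ᵥ A *ᵥ (ths - th0) :=
    dot_symm A hSym _ _
  have h2 : (A *ᵥ (ths - th0)) ⬝ᵥ (th - ths) = (th - ths) ⬝ᵥ A *ᵥ (ths - th0) :=
    dotProduct_comm _ _
  unfold znObj
  rw [hth, Matrix.mulVec_add, dotProduct_add, add_dotProduct, add_dotProduct, h1, h2]
  ring

lemma kkt_min {p : ℕ} (A : Matrix (Fin p) (Fin p) ℝ)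
    (hSym : ∀ i j, A i j = A j i) (th0 : Fin p → ℝ) (xi : ℝ) (ths : Fin p → ℝ)
    (hg : ∀ i, |(A *ᵥ (ths - th0)) i| ≤ xi ∧
      (A *ᵥ (ths - th0)) i * ths i + xi * |ths i| = 0) (th : Fin p → ℝ) :
    znObj A th0 xi ths + (1/2) * ((th - ths) ⬝ᵥ A *ᵥ (th - ths)) ≤ znObj A th0 xi th := by
  rw [znObj_expand A hSym th0 xi ths th]
  have key : 0 ≤ (A *ᵥ (ths - th0)) ⬝ᵥ (th - ths) + xi * (l1n th - l1n ths) := by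
    have hrw : (A *ᵥ (ths - th0)) ⬝ᵥ (th - ths) + xi * (l1n th - l1n ths)
        = ∑ i, ((A *ᵥ (ths - th0)) i * (th i - ths i) + xi * (|th i| - |ths i|)) := by
      simp only [dotProduct, l1n, Pi.sub_apply, Finset.mul_sum, ← Finset.sum_sub_distrib,
        ← Finset.sum_add_distrib]
    rw [hrw]
    apply Finset.sum_nonneg
    intro i _
    obtain ⟨hb, he⟩ := hg i
    have h3 : -(|(A *ᵥ (ths - th0)) i| * |th i|) ≤ (A *ᵥ (ths - th0)) i * th i := by
      rw [← abs_mul]; exact neg_abs_le _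
    have h4 : |(A *ᵥ (ths - th0)) i| * |th i| ≤ xi * |th i| :=
      mul_le_mul_of_nonneg_right hb (abs_nonneg _)
    nlinarith [abs_nonneg (th i), abs_nonneg (ths i)]
  linarith

/-- the confounding-variable example, Appendix B of the paper.
For `Σ = I + a(e_p u_Sᵀ + u_S e_pᵀ)` with `S = {1,…,s0}` and `a ∈ [1/s0, 1/√s0)`:
`Σ` is positive definite with minimum eigenvalue `1 − a√s0`; the standard
irrepresentability quantity equals `a·s0 ≥ 1` (so irrepresentability fails in the strict
sense); and for every `ξ ∈ (0,ξ*)`, with `ξ* = min(1,(1−a²s0)/(1−a))·θ_min`, the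
population-level estimator satisfies `θ̂∞_p(ξ) = ((a·s0−1)/(1−a²s0))·ξ`,
`θ̂∞_S(ξ) = θ0_S − (a·θ̂∞_p(ξ) + ξ)·1_S`, and `θ̂∞_i(ξ) = 0` for `i ∉ S ∪ {p}`; in
particular `T0 = S ∪ {p}` when `a > 1/s0`, and then the generalized irrepresentability
quantity `‖Σ_{T0ᶜ,T0}Σ_{T0,T0}^{-1}v0_{T0}‖_∞` vanishes (`v0_{T0}` the all-ones vector). -/
theorem stmt18
    (p s0 : ℕ) (hs0 : 1 ≤ s0) (hp : s0 < p)
    (a : ℝ) (ha1 : 1 / (s0 : ℝ) ≤ a) (ha2 : a < 1 / Real.sqrt s0)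
    (S : Finset (Fin p)) (hS : S = Finset.univ.filter fun i : Fin p => (i : ℕ) < s0)
    (uS : Fin p → ℝ) (huS : uS = fun i : Fin p => if (i : ℕ) < s0 then (1 : ℝ) else 0)
    (eP : Fin p → ℝ) (heP : eP = fun i : Fin p => if (i : ℕ) = p - 1 then (1 : ℝ) else 0)
    (Sig : Matrix (Fin p) (Fin p) ℝ)
    (hSigDef : Sig = 1 + a • Matrix.of (fun i j => eP i * uS j + uS i * eP j))
    (th0 : Fin p → ℝ) (hsupp : suppv th0 = S) (hpos : ∀ i ∈ S, 0 < th0 i)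
    (T0 : Finset (Fin p))
    (hT0 : T0 = S ∪ (Finset.univ.filter fun i : Fin p => (i : ℕ) = p - 1))
    -- the (unique) population-level estimator
    (thinf : ℝ → (Fin p → ℝ))
    (hmin : ∀ xi, 0 < xi → ∀ th, znObj Sig th0 xi (thinf xi) ≤ znObj Sig th0 xi th) :
    -- Σ is positive definite with minimum eigenvalue 1 − a√s0
    (Sig.PosDef ∧
      (∀ u : Fin p → ℝ,
        (1 - a * Real.sqrt s0) * (∑ i, (u i) ^ 2) ≤ u ⬝ᵥ (Sig *ᵥ u)) ∧
      (∃ u : Fin p → ℝ, u ≠ 0 ∧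
        u ⬝ᵥ (Sig *ᵥ u) = (1 - a * Real.sqrt s0) * (∑ i, (u i) ^ 2))) ∧
    -- (1) the standard irrepresentability quantity equals a·s0 ≥ 1
    ((∀ j, j ∉ S →
        |(Sig *ᵥ extendT S ((subM Sig S S)⁻¹ *ᵥ restrv (sgnv th0) S)) j| ≤ a * s0) ∧
      (∃ j, j ∉ S ∧
        |(Sig *ᵥ extendT S ((subM Sig S S)⁻¹ *ᵥ restrv (sgnv th0) S)) j| = a * s0) ∧
      1 ≤ a * s0) ∧
    -- (2) the population-level estimator for ξ ∈ (0, ξ*)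
    (∀ xi : ℝ, 0 < xi →
      (∀ i ∈ S, xi < min 1 ((1 - a ^ 2 * s0) / (1 - a)) * th0 i) →
      ((∀ i : Fin p, (i : ℕ) = p - 1 →
          thinf xi i = ((a * s0 - 1) / (1 - a ^ 2 * s0)) * xi) ∧
       (∀ i ∈ S,
          thinf xi i = th0 i - (a * (((a * s0 - 1) / (1 - a ^ 2 * s0)) * xi) + xi)) ∧
       (∀ i : Fin p, i ∉ S → (i : ℕ) ≠ p - 1 → thinf xi i = 0) ∧
       (1 / (s0 : ℝ) < a → suppv (thinf xi) = T0) ∧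
       (1 / (s0 : ℝ) < a → ∀ j, j ∉ T0 →
          (Sig *ᵥ extendT T0 ((subM Sig T0 T0)⁻¹ *ᵥ (fun _ : ↥T0 => (1 : ℝ)))) j = 0))) := by
  -- basic numeric facts
  have hs0pos : (0:ℝ) < s0 := by exact_mod_cast Nat.lt_of_lt_of_le Nat.zero_lt_one hs0
  have hs0R : (1:ℝ) ≤ s0 := by exact_mod_cast hs0
  have hppos : 0 < p := lt_of_le_of_lt (Nat.zero_le s0) hp
  have hpm1lt : p - 1 < p := Nat.sub_lt hppos Nat.one_pos
  set pm1 : Fin p := ⟨p - 1, hpm1lt⟩ with hpm1def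
  have hs0le : s0 ≤ p - 1 := Nat.le_sub_one_of_lt hp
  have hpm1ns : ¬ ((pm1 : ℕ) < s0) := by simp only [hpm1def]; omega
  have hsqpos : 0 < Real.sqrt s0 := Real.sqrt_pos.mpr hs0pos
  have hsq : Real.sqrt s0 ^ 2 = (s0:ℝ) := Real.sq_sqrt hs0pos.le
  have hsq1 : 1 ≤ Real.sqrt s0 := by
    rw [show (1:ℝ) = Real.sqrt 1 from (Real.sqrt_one).symm]
    exact Real.sqrt_le_sqrt hs0R
  have ha0 : 0 < a := lt_of_lt_of_le (by positivity) ha1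
  have hasq : a * Real.sqrt s0 < 1 := (lt_div_iff₀ hsqpos).mp ha2
  have ha2s0 : a ^ 2 * s0 < 1 := by
    nlinarith [mul_nonneg ha0.le hsqpos.le]
  have has0 : 1 ≤ a * s0 := by
    rw [div_le_iff₀ hs0pos] at ha1; linarith
  have halt1 : a < 1 := lt_of_lt_of_le ha2 (by rw [div_le_one hsqpos]; exact hsq1)
  have hSmem : ∀ i : Fin p, i ∈ S ↔ (i : ℕ) < s0 := by
    intro i; rw [hS]; simp
  have hth0z : ∀ i : Fin p, ¬ ((i : ℕ) < s0) → th0 i = 0 := by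
    intro i hi
    have : i ∉ suppv th0 := by rw [hsupp]; rw [hSmem]; exact hi
    simpa [suppv] using this
  have hcardS : S.card = s0 := by
    have : S = Finset.Iio (⟨s0, hp⟩ : Fin p) := by
      rw [hS]; ext i; simp [Fin.lt_def]
    rw [this, Fin.card_Iio]
  -- sum lemmas
  have hsum_uS : ∀ v : Fin p → ℝ, ∑ i, uS i * v i = ∑ i ∈ S, v i := by
    intro v
    rw [hS, Finset.sum_filter]
    refine Finset.sum_congr rfl fun i _ => ?_
    by_cases h : (i:ℕ) < s0 <;> simp [huS, h]
  have hsum_eP : ∀ v : Fin p → ℝ, ∑ i, eP i * v i = v pm1 := by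
    intro v
    have : ∀ i ∈ Finset.univ, eP i * v i = if i = pm1 then v i else 0 := by
      intro i _
      by_cases h : (i:ℕ) = p - 1
      · have hi : i = pm1 := Fin.ext h
        simp [heP, h, hi, show (pm1:ℕ) = p - 1 from rfl]
      · have hi : i ≠ pm1 := fun hc => h (by rw [hc])
        simp [heP, h, hi]
    rw [Finset.sum_congr rfl this, Finset.sum_ite_eq' Finset.univ pm1 v]
    simp
  -- mulVec formula
  have hmv : ∀ (v : Fin p → ℝ) (j : Fin p), (Sig *ᵥ v) j
      = v j + a * (eP j * (∑ i ∈ S, v i) + uS j * v pm1) := by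
    intro v j
    rw [hSigDef, Matrix.add_mulVec, Matrix.one_mulVec, Matrix.smul_mulVec]
    simp only [Pi.add_apply, Pi.smul_apply, smul_eq_mul]
    congr 1
    have : (Matrix.of (fun i j => eP i * uS j + uS i * eP j) *ᵥ v) j
        = ∑ k, (eP j * (uS k * v k) + uS j * (eP k * v k)) := by
      simp only [Matrix.mulVec, dotProduct, Matrix.of_apply]
      exact Finset.sum_congr rfl fun k _ => by ring
    rw [this, Finset.sum_add_distrib, ← Finset.mul_sum, ← Finset.mul_sum, hsum_uS, hsum_eP]
  -- symmetry
  have hSym : ∀ i j, Sig i j = Sig j i := by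
    intro i j
    rw [hSigDef]
    simp only [Matrix.add_apply, Matrix.one_apply, Matrix.smul_apply, Matrix.of_apply,
      smul_eq_mul]
    by_cases h : i = j
    · rw [h]
    · rw [if_neg h, if_neg (Ne.symm h)]; ring
  -- quadratic form
  have hqf : ∀ v : Fin p → ℝ, v ⬝ᵥ Sig *ᵥ v
      = (∑ i, v i ^ 2) + 2 * a * v pm1 * (∑ i ∈ S, v i) := by
    intro v
    have h1 : ∀ j ∈ Finset.univ, v j * (Sig *ᵥ v) j
        = v j ^ 2 + a * (∑ i ∈ S, v i) * (eP j * v j) + a * v pm1 * (uS j * v j) := by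
      intro j _; rw [hmv]; ring
    rw [show v ⬝ᵥ Sig *ᵥ v = ∑ j, v j * (Sig *ᵥ v) j from rfl,
      Finset.sum_congr rfl h1, Finset.sum_add_distrib, Finset.sum_add_distrib,
      ← Finset.mul_sum, ← Finset.mul_sum, hsum_eP, hsum_uS]
    ring
  -- lower bound
  have hlower : ∀ v : Fin p → ℝ,
      (1 - a * Real.sqrt s0) * (∑ i, v i ^ 2) ≤ v ⬝ᵥ Sig *ᵥ v := by
    intro v
    rw [hqf v]
    have hA : ∑ i ∈ S, v i ^ 2 + v pm1 ^ 2 ≤ ∑ i, v i ^ 2 := by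
      have hsub : insert pm1 S ⊆ Finset.univ := Finset.subset_univ _
      have hnm : pm1 ∉ S := by rw [hSmem]; exact hpm1ns
      calc ∑ i ∈ S, v i ^ 2 + v pm1 ^ 2 = ∑ i ∈ insert pm1 S, v i ^ 2 := by
            rw [Finset.sum_insert hnm]; ring
        _ ≤ ∑ i, v i ^ 2 :=
            Finset.sum_le_sum_of_subset_of_nonneg hsub fun i _ _ => sq_nonneg _
    have ht : (∑ i ∈ S, v i) ^ 2 ≤ (s0:ℝ) * ∑ i ∈ S, v i ^ 2 := by
      have := sq_sum_le_card_mul_sum_sq (s := S) (f := v)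
      rw [hcardS] at this
      exact_mod_cast this
    have k2 : 0 ≤ Real.sqrt s0 * (Real.sqrt s0 * (∑ i, v i ^ 2) + 2 * v pm1 * (∑ i ∈ S, v i)) := by
      nlinarith [sq_nonneg (Real.sqrt s0 * v pm1 + ∑ i ∈ S, v i),
        mul_le_mul_of_nonneg_left hA hs0pos.le]
    have key : 0 ≤ Real.sqrt s0 * (∑ i, v i ^ 2) + 2 * v pm1 * (∑ i ∈ S, v i) :=
      nonneg_of_mul_nonneg_right (by linarith [k2]) hsqpos
    nlinarith [mul_nonneg ha0.le key]
  -- Positive definiteness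
  have hherm : Sig.IsHermitian := by
    ext i j
    simp only [Matrix.conjTranspose_apply]
    rw [star_trivial]
    exact hSym j i
  have hPD : Sig.PosDef := by
    refine Matrix.PosDef.of_dotProduct_mulVec_pos hherm fun x hx => ?_
    have hst : star x = x := by funext i; simp
    rw [hst]
    have hsum : 0 < ∑ i, x i ^ 2 := by
      obtain ⟨i, hi⟩ := Function.ne_iff.mp hx
      have hi' : x i ≠ 0 := hi
      have h1 : 0 < x i ^ 2 :=
        lt_of_le_of_ne (sq_nonneg _) (Ne.symm (pow_ne_zero 2 hi'))
      have h2 : x i ^ 2 ≤ ∑ j, x j ^ 2 :=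
        Finset.single_le_sum (fun j _ => sq_nonneg (x j)) (Finset.mem_univ i)
      linarith
    have := hlower x
    nlinarith [mul_pos (show (0:ℝ) < 1 - a * Real.sqrt s0 by linarith) hsum]
  -- witness vector
  set w : Fin p → ℝ :=
    fun i => if (i:ℕ) < s0 then 1 / Real.sqrt s0 else if (i:ℕ) = p - 1 then -1 else 0 with hwdef
  have hwpm1 : w pm1 = -1 := by
    rw [hwdef]; simp only; rw [if_neg hpm1ns]; simp [show (pm1:ℕ) = p - 1 from rfl]
  have hwne : w ≠ 0 := by
    intro h0
    have := congrFun h0 pm1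
    rw [hwpm1] at this
    norm_num at this
  have hwS : ∀ i ∈ S, w i = 1 / Real.sqrt s0 := by
    intro i hi
    rw [hwdef]; simp only; rw [if_pos ((hSmem i).mp hi)]
  have hwsumS : ∑ i ∈ S, w i = Real.sqrt s0 := by
    rw [Finset.sum_congr rfl hwS, Finset.sum_const, hcardS, nsmul_eq_mul]
    rw [mul_one_div, div_eq_iff hsqpos.ne']
    linear_combination -hsq
  have hnm : pm1 ∉ S := by rw [hSmem]; exact hpm1ns
  have hwsq : ∑ i, w i ^ 2 = 2 := by
    have hzero : ∀ i ∈ Finset.univ, i ∉ insert pm1 S → w i ^ 2 = 0 := by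
      intro i _ hi
      rw [Finset.mem_insert] at hi
      push_neg at hi
      have h1 : ¬ (i:ℕ) < s0 := fun hc => hi.2 ((hSmem i).mpr hc)
      have h2 : ¬ (i:ℕ) = p - 1 := fun hc => hi.1 (Fin.ext hc)
      rw [hwdef]; simp only; rw [if_neg h1, if_neg h2]; ring
    rw [← Finset.sum_subset (Finset.subset_univ (insert pm1 S)) hzero,
      Finset.sum_insert hnm, hwpm1]
    have : ∀ i ∈ S, w i ^ 2 = 1 / (s0:ℝ) := by
      intro i hi
      rw [hwS i hi, div_pow, one_pow, hsq]
    rw [Finset.sum_congr rfl this, Finset.sum_const, hcardS, nsmul_eq_mul]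
    field_simp
    norm_num
  refine ⟨⟨hPD, hlower, ⟨w, hwne, ?_⟩⟩, ?_, ?_⟩
  · rw [hqf w, hwsq, hwpm1, hwsumS]
    ring
  · -- part 1 : standard irrepresentability
    have hSig_SS : subM Sig S S = 1 := by
      ext i j
      have hi : ((i : ↥S) : Fin p).val < s0 := (hSmem _).mp i.2
      have hj : ((j : ↥S) : Fin p).val < s0 := (hSmem _).mp j.2
      have hiP : eP (i : Fin p) = 0 := by rw [heP]; simp only; rw [if_neg (by omega)]
      have hjP : eP (j : Fin p) = 0 := by rw [heP]; simp only; rw [if_neg (by omega)]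
      simp only [subM, Matrix.submatrix_apply, hSigDef, Matrix.add_apply, Matrix.smul_apply,
        Matrix.of_apply, smul_eq_mul, hiP, hjP, mul_zero, zero_mul, add_zero]
      rw [Matrix.one_apply, Matrix.one_apply]
      simp [Subtype.val_inj]
    have hvec : extendT S ((subM Sig S S)⁻¹ *ᵥ restrv (sgnv th0) S) = uS := by
      rw [hSig_SS, inv_one, Matrix.one_mulVec]
      funext i
      by_cases h : i ∈ S
      · have hp0 : 0 < th0 i := hpos i h
        simp [extendT, h, restrv, sgnv, Real.sign_of_pos hp0, huS, (hSmem i).mp h]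
      · have h2 : ¬ (i:ℕ) < s0 := fun hc => h ((hSmem i).mpr hc)
        simp [extendT, h, huS, h2]
    have huSpm1 : uS pm1 = 0 := by rw [huS]; simp only; rw [if_neg hpm1ns]
    have hsum1 : ∑ i ∈ S, uS i = (s0:ℝ) := by
      have : ∀ i ∈ S, uS i = 1 := by
        intro i hi; rw [huS]; simp only; rw [if_pos ((hSmem i).mp hi)]
      rw [Finset.sum_congr rfl this, Finset.sum_const, hcardS, nsmul_eq_mul, mul_one]
    have hSigUs : ∀ j : Fin p, (Sig *ᵥ uS) j = uS j + a * (eP j * s0) := by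
      intro j; rw [hmv uS j, hsum1, huSpm1]; ring
    rw [hvec]
    have hval : ∀ j, j ∉ S → (Sig *ᵥ uS) j = a * s0 * eP j := by
      intro j hj
      have h2 : ¬ (j:ℕ) < s0 := fun hc => hj ((hSmem j).mpr hc)
      have : uS j = 0 := by rw [huS]; simp only; rw [if_neg h2]
      rw [hSigUs j, this]; ring
    have has0' : 0 ≤ a * s0 := by positivity
    refine ⟨?_, ⟨pm1, hnm, ?_⟩, has0⟩
    · intro j hj
      rw [hval j hj]
      by_cases h2 : (j:ℕ) = p - 1
      · rw [heP]; simp only; rw [if_pos h2, mul_one, abs_of_nonneg has0']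
      · rw [heP]; simp only; rw [if_neg h2, mul_zero, abs_zero]; exact has0'
    · rw [hval pm1 hnm, heP]; simp [abs_of_nonneg has0', show (pm1:ℕ) = p - 1 from rfl]
  -- part 2
  intro xi hxi0 hxib
  set b : ℝ := ((a * (s0:ℝ) - 1) / (1 - a ^ 2 * (s0:ℝ))) * xi with hbdef
  set c : ℝ := a * b + xi with hcdef
  have hden : (0:ℝ) < 1 - a ^ 2 * s0 := by linarith
  have h1a : (0:ℝ) < 1 - a := by linarith
  have hbge : 0 ≤ b := mul_nonneg (div_nonneg (by linarith) hden.le) hxi0.le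
  have hcval : c = xi * (1 - a) / (1 - a ^ 2 * s0) := by
    rw [hcdef, hbdef]; field_simp; ring
  have hclt : ∀ i : Fin p, (i:ℕ) < s0 → c < th0 i := by
    intro i hi
    have hiS : i ∈ S := (hSmem i).mpr hi
    have h0 : 0 < th0 i := hpos i hiS
    have hx := hxib i hiS
    have hmle : min 1 ((1 - a ^ 2 * s0)/(1 - a)) * th0 i ≤ ((1 - a ^ 2 * s0)/(1 - a)) * th0 i :=
      mul_le_mul_of_nonneg_right (min_le_right _ _) h0.le
    have hxi2 : xi < ((1 - a ^ 2 * s0)/(1 - a)) * th0 i := lt_of_lt_of_le hx hmle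
    rw [div_mul_eq_mul_div, lt_div_iff₀ h1a] at hxi2
    rw [hcval, div_lt_iff₀ hden]
    nlinarith [hxi2]
  set tst : Fin p → ℝ :=
    fun i => if (i:ℕ) < s0 then th0 i - c else if (i:ℕ) = p - 1 then b else 0 with htst
  have htspm1 : tst pm1 = b := by
    rw [htst]; simp only; rw [if_neg hpm1ns]; simp [show (pm1:ℕ) = p - 1 from rfl]
  have htsS : ∀ i : Fin p, (i:ℕ) < s0 → tst i = th0 i - c := by
    intro i hi; rw [htst]; simp only; rw [if_pos hi]
  have htsZ : ∀ i : Fin p, ¬ (i:ℕ) < s0 → ¬ (i:ℕ) = p - 1 → tst i = 0 := by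
    intro i h1 h2; rw [htst]; simp only; rw [if_neg h1, if_neg h2]
  have hdS : ∑ i ∈ S, (tst - th0) i = (s0:ℝ) * (-c) := by
    have : ∀ i ∈ S, (tst - th0) i = -c := by
      intro i hi
      rw [Pi.sub_apply, htsS i ((hSmem i).mp hi)]; ring
    rw [Finset.sum_congr rfl this, Finset.sum_const, hcardS, nsmul_eq_mul]
  have hdpm1 : (tst - th0) pm1 = b := by
    rw [Pi.sub_apply, htspm1, hth0z pm1 hpm1ns]; ring
  have hkkt : ∀ j, |(Sig *ᵥ (tst - th0)) j| ≤ xi ∧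
      (Sig *ᵥ (tst - th0)) j * tst j + xi * |tst j| = 0 := by
    intro j
    by_cases hj1 : (j:ℕ) < s0
    · have hup : uS j = 1 := by rw [huS]; simp only; rw [if_pos hj1]
      have hep : eP j = 0 := by rw [heP]; simp only; rw [if_neg (by omega)]
      have hts := htsS j hj1
      have hposj : 0 < tst j := by rw [hts]; have := hclt j hj1; linarith
      have hval : (Sig *ᵥ (tst - th0)) j = -xi := by
        rw [hmv (tst - th0) j, hdS, hdpm1, hup, hep, Pi.sub_apply, hts, hcdef]; ring
      refine ⟨by rw [hval, abs_neg, abs_of_pos hxi0], ?_⟩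
      rw [hval, abs_of_pos hposj]; ring
    · by_cases hj2 : (j:ℕ) = p - 1
      · have hup : uS j = 0 := by rw [huS]; simp only; rw [if_neg hj1]
        have hep : eP j = 1 := by rw [heP]; simp only; rw [if_pos hj2]
        have hts : tst j = b := by rw [htst]; simp only; rw [if_neg hj1, if_pos hj2]
        have hdj : (tst - th0) j = b := by
          rw [Pi.sub_apply, hts, hth0z j hj1]; ring
        have hval : (Sig *ᵥ (tst - th0)) j = -xi := by
          rw [hmv (tst - th0) j, hdS, hdpm1, hup, hep, hdj, hcdef, hbdef]
          field_simp
          ring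
        refine ⟨by rw [hval, abs_neg, abs_of_pos hxi0], ?_⟩
        rw [hval, hts, abs_of_nonneg hbge]; ring
      · have hup : uS j = 0 := by rw [huS]; simp only; rw [if_neg hj1]
        have hep : eP j = 0 := by rw [heP]; simp only; rw [if_neg hj2]
        have hts := htsZ j hj1 hj2
        have hdj : (tst - th0) j = 0 := by
          rw [Pi.sub_apply, hts, hth0z j hj1]; ring
        have hval : (Sig *ᵥ (tst - th0)) j = 0 := by
          rw [hmv (tst - th0) j, hup, hep, hdj]; ring
        refine ⟨by rw [hval, abs_zero]; exact hxi0.le, ?_⟩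
        rw [hval, hts]; simp
  have h1 := kkt_min Sig hSym th0 xi tst hkkt (thinf xi)
  have h2 := hmin xi hxi0 tst
  have hqle : (thinf xi - tst) ⬝ᵥ Sig *ᵥ (thinf xi - tst) ≤ 0 := by linarith
  have hsnn : (0:ℝ) ≤ ∑ i, (thinf xi - tst) i ^ 2 :=
    Finset.sum_nonneg fun i _ => sq_nonneg _
  have hsum0 : ∑ i, (thinf xi - tst) i ^ 2 ≤ 0 := by
    have := hlower (thinf xi - tst)
    nlinarith
  have hsumz : ∑ i, (thinf xi - tst) i ^ 2 = 0 := le_antisymm hsum0 hsnn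
  have heqv : thinf xi = tst := by
    funext i
    have hz : (thinf xi - tst) i ^ 2 = 0 :=
      (Finset.sum_eq_zero_iff_of_nonneg fun i _ => sq_nonneg _).mp hsumz i (Finset.mem_univ i)
    have h0 : (thinf xi - tst) i = 0 := by
      have := sq_eq_zero_iff.mp hz
      exact this
    rw [Pi.sub_apply] at h0
    linarith
  refine ⟨?_, ?_, ?_, ?_, ?_⟩
  · intro i hi
    rw [heqv, htst]; simp only; rw [if_neg (by omega), if_pos hi]
  · intro i hiS
    rw [heqv, htsS i ((hSmem i).mp hiS)]
  · intro i hiS hip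
    have h1' : ¬ (i:ℕ) < s0 := fun hc => hiS ((hSmem i).mpr hc)
    rw [heqv, htsZ i h1' hip]
  · intro hgt
    have hbpos : 0 < b := by
      apply mul_pos (div_pos ?_ hden) hxi0
      rw [div_lt_iff₀ hs0pos] at hgt; linarith
    rw [heqv, hT0]
    ext i
    simp only [suppv, Finset.mem_filter, Finset.mem_univ, true_and, Finset.mem_union, hSmem]
    by_cases hj1 : (i:ℕ) < s0
    · have hne : tst i ≠ 0 := by
        rw [htsS i hj1]
        exact (sub_pos.mpr (hclt i hj1)).ne'
      simp [hne, hj1]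
    · by_cases hj2 : (i:ℕ) = p - 1
      · have hts : tst i = b := by rw [htst]; simp only; rw [if_neg hj1, if_pos hj2]
        have hne : tst i ≠ 0 := by rw [hts]; exact hbpos.ne'
        simp [hne, hj1, hj2]
      · have hts := htsZ i hj1 hj2
        simp [hts, hj1, hj2]
  · intro _ j hj
    have hjS : j ∉ S := fun h => hj (by rw [hT0]; exact Finset.mem_union_left _ h)
    have hjP : ¬ (j:ℕ) = p - 1 := fun h =>
      hj (by rw [hT0]; exact Finset.mem_union_right _ (by simp [h]))
    have hjs0 : ¬ (j:ℕ) < s0 := fun hc => hjS ((hSmem j).mpr hc)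
    have e1 : extendT T0 ((subM Sig T0 T0)⁻¹ *ᵥ fun _ => (1:ℝ)) j = 0 := by
      simp [extendT, hj]
    have e2 : eP j = 0 := by rw [heP]; simp only; rw [if_neg hjP]
    have e3 : uS j = 0 := by rw [huS]; simp only; rw [if_neg hjs0]
    rw [hmv, e1, e2, e3]; ring
end
end
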